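/- arXiv:2506.21128 — 5 statements merged into one kernel-verified Lean document; each statement's English description precedes it below -/
import Mathlib

section
/- Let V be a finite-dimensional real normed vector space that is positive definite as a metric space. Then every closed ball in V has finite magnitude if and only if there exist a point x ∈ V and a radius r > 0 such that the closed ball of radius r about x has finite magnitude. -/
open Metric TopologicalSpace Filter Topology Bornology
open scoped ENNReal NNReal

/-- The similarity matrix of a finite subset of a metric space. -/
noncomputable def simMatrix {X : Type*} [MetricSpace X] (s : Finset X) : Matrix s s ℝ :=
  fun i j => Real.exp (-dist (i : X) (j : X))

/-- A metric space is positive definite when every finite subspace has a positive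
definite similarity matrix. -/
def IsPosDefSpace (X : Type*) [MetricSpace X] : Prop :=
  ∀ s : Finset X, (simMatrix s).PosDef

/-- The magnitude of a finite subset of a metric space: the sum of the entries of the
inverse of its similarity matrix. -/
noncomputable def finMag {X : Type*} [MetricSpace X] (s : Finset X) : ℝ :=
  letI : DecidableEq X := Classical.decEq X
  ∑ i, ∑ j, (simMatrix s)⁻¹ i j

/-- The magnitude of a (compact) subset of a metric space, valued in `[0, ∞]`:
the supremum of the magnitudes of its finite subsets. -/
noncomputable def cMagE {X : Type*} [MetricSpace X] (K : Set X) : ℝ≥0∞ :=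
  ⨆ (s : Finset X) (_ : (s : Set X) ⊆ K), ENNReal.ofReal (finMag s)

/-- The real-valued magnitude of a (compact) subset of a metric space. -/
noncomputable def cMag {X : Type*} [MetricSpace X] (K : Set X) : ℝ :=
  (cMagE K).toReal

/-- A metric space is tractable when it is positive definite and all of its closed balls
are compact and of finite magnitude. -/
def Tractable (X : Type*) [MetricSpace X] : Prop :=
  IsPosDefSpace X ∧ (∀ (x : X) (r : ℝ), IsCompact (closedBall x r)) ∧
    ∀ (x : X) (r : ℝ), cMagE (closedBall x r) < ⊤

section Aux

open Matrix
open scoped Kronecker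

/-- Quadratic upper bound from positive semidefiniteness: if `M *ᵥ u = b` then for every `v`,
`2 (b ⬝ᵥ v) - v ⬝ᵥ M v ≤ u ⬝ᵥ b`. -/
lemma mag_quad_bound {n : Type*} [Fintype n] {M : Matrix n n ℝ}
    (hM : M.PosSemidef) {u b : n → ℝ} (hu : M *ᵥ u = b) (v : n → ℝ) :
    2 * (b ⬝ᵥ v) - v ⬝ᵥ (M *ᵥ v) ≤ u ⬝ᵥ b := by
  have hsym : ∀ p q, M p q = M q p := by
    intro p q
    have h := congrFun (congrFun hM.1 q) p
    simpa [Matrix.conjTranspose_apply] using h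
  have key := hM.dotProduct_mulVec_nonneg (v - u)
  rw [star_trivial] at key
  have e1 : M *ᵥ (v - u) = M *ᵥ v - b := by rw [Matrix.mulVec_sub, hu]
  have e2 : u ⬝ᵥ (M *ᵥ v) = v ⬝ᵥ b := by
    rw [← hu]
    calc u ⬝ᵥ (M *ᵥ v) = ∑ p, ∑ q, u p * (M p q * v q) := by
          simp [dotProduct, Matrix.mulVec, Finset.mul_sum]
      _ = ∑ q, ∑ p, v q * (M q p * u p) := by
          rw [Finset.sum_comm]
          refine Finset.sum_congr rfl fun q _ => Finset.sum_congr rfl fun p _ => ?_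
          rw [hsym p q]; ring
      _ = v ⬝ᵥ (M *ᵥ u) := by
          simp [dotProduct, Matrix.mulVec, Finset.mul_sum]
  rw [e1, sub_dotProduct, dotProduct_sub, dotProduct_sub, e2] at key
  have hcomm : b ⬝ᵥ v = v ⬝ᵥ b := dotProduct_comm _ _
  have hcomm2 : u ⬝ᵥ b = b ⬝ᵥ u := dotProduct_comm _ _
  nlinarith [key]

/-- Summing a function extended by zero along an injection. -/
lemma mag_sum_extend {α β : Type*} [Fintype α] [Fintype β]
    {ι : α → β} (hι : Function.Injective ι) (w : α → ℝ) (g : β → ℝ) :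
    ∑ b, (Function.extend ι w 0) b * g b = ∑ a, w a * g (ι a) := by
  classical
  have h0 : ∀ b ∈ Finset.univ, b ∉ Finset.univ.image ι →
      (Function.extend ι w 0) b * g b = 0 := by
    intro b _ hb
    have : ¬∃ a, ι a = b := by
      rintro ⟨a, rfl⟩
      exact hb (Finset.mem_image_of_mem ι (Finset.mem_univ a))
    rw [Function.extend_apply' _ _ _ this]
    simp
  rw [← Finset.sum_subset (Finset.subset_univ (Finset.univ.image ι)) h0]
  rw [Finset.sum_image (fun x _ y _ h => hι h)]
  refine Finset.sum_congr rfl fun a _ => ?_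
  rw [hι.extend_apply]

/-- If the there is a distance-halving map sending `s` into `t`, then
`finMag s ≤ finMag t * finMag t`. -/
lemma finMag_le_mul_of_half {V : Type*} [MetricSpace V] (hpd : IsPosDefSpace V)
    {f : V → V} (hf : ∀ a b : V, dist (f a) (f b) = dist a b / 2)
    {s t : Finset V} (hts : ∀ x ∈ s, f x ∈ t) :
    finMag s ≤ finMag t * finMag t := by
  letI : DecidableEq V := Classical.decEq V
  set Z : Matrix s s ℝ := simMatrix s with hZdef
  set Z' : Matrix t t ℝ := simMatrix t with hZ'def
  have hZ : Z.PosDef := hpd s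
  have hZ' : Z'.PosDef := hpd t
  -- the Kronecker square
  set K : Matrix (t × t) (t × t) ℝ := Z' ⊗ₖ Z' with hKdef
  have hK : K.PosSemidef := by
    obtain ⟨B, hB⟩ : ∃ B : Matrix t t ℝ, Z' = Bᴴ * B := by
      open scoped MatrixOrder in
      exact CStarAlgebra.nonneg_iff_eq_star_mul_self.mp hZ'.posSemidef.nonneg
    have hc : (B ⊗ₖ B)ᴴ = Bᴴ ⊗ₖ Bᴴ := by
      ext i j
      simp [Matrix.conjTranspose_apply, Matrix.kroneckerMap_apply]
    have : K = (B ⊗ₖ B)ᴴ * (B ⊗ₖ B) := by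
      rw [hKdef, hB, Matrix.mul_kronecker_mul, hc]
    rw [this]
    exact Matrix.posSemidef_conjTranspose_mul_self _
  -- weight vectors
  set u : {v // v ∈ t} → ℝ := Z'⁻¹ *ᵥ (fun _ => 1) with hudef
  have hu : Z' *ᵥ u = fun _ => 1 := by
    rw [hudef, Matrix.mulVec_mulVec, Matrix.mul_nonsing_inv _ hZ'.det_pos.ne'.isUnit,
      Matrix.one_mulVec]
  set w : {v // v ∈ s} → ℝ := Z⁻¹ *ᵥ (fun _ => 1) with hwdef
  have hw : Z *ᵥ w = fun _ => 1 := by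
    rw [hwdef, Matrix.mulVec_mulVec, Matrix.mul_nonsing_inv _ hZ.det_pos.ne'.isUnit,
      Matrix.one_mulVec]
  -- expressions for the magnitudes
  have hmg_s : finMag s = (fun _ => (1:ℝ)) ⬝ᵥ w := by
    simp [finMag, hwdef, hZdef, dotProduct, Matrix.mulVec]
  have hmg_t : finMag t = (fun _ => (1:ℝ)) ⬝ᵥ u := by
    simp [finMag, hudef, hZ'def, dotProduct, Matrix.mulVec]
  -- the product weight vector
  set ub : ({v // v ∈ t} × {v // v ∈ t}) → ℝ := fun p => u p.1 * u p.2 with hubdef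
  have hub : K *ᵥ ub = fun _ => 1 := by
    funext p
    show ∑ q : {v // v ∈ t} × {v // v ∈ t}, K p q * ub q = 1
    rw [Fintype.sum_prod_type]
    have hterm : ∀ q1 q2, K p (q1, q2) * ub (q1, q2)
        = (Z' p.1 q1 * u q1) * (Z' p.2 q2 * u q2) := by
      intro q1 q2
      show (Z' p.1 q1 * Z' p.2 q2) * (u q1 * u q2) = _
      ring
    simp_rw [hterm]
    rw [← Finset.sum_mul_sum]
    have h1 : ∑ q1, Z' p.1 q1 * u q1 = 1 := congrFun hu p.1
    have h2 : ∑ q2, Z' p.2 q2 * u q2 = 1 := congrFun hu p.2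
    rw [h1, h2, mul_one]
  -- the diagonal embedding
  have hmem : ∀ x : {v // v ∈ s}, f ↑x ∈ t := fun x => hts _ x.2
  set ι : {v // v ∈ s} → ({v // v ∈ t} × {v // v ∈ t}) :=
    fun x => (⟨f ↑x, hmem x⟩, ⟨f ↑x, hmem x⟩) with hιdef
  have hι : Function.Injective ι := by
    intro x y h
    have hfxy : f ↑x = f ↑y := by
      have := congrArg (fun p => (p.1 : V)) h
      simpa [hιdef] using this
    have hd : dist (x : V) (y : V) = 0 := by
      have h2 := hf (x : V) (y : V)
      rw [hfxy] at h2
      simp at h2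
      linarith [h2]
    exact Subtype.ext (by
      have := dist_eq_zero.mp hd
      exact this)
  -- pull back of the Kronecker matrix along the diagonal
  have hKpull : ∀ x y : {v // v ∈ s}, K (ι x) (ι y) = Z x y := by
    intro x y
    show Real.exp (-dist (f ↑x) (f ↑y)) * Real.exp (-dist (f ↑x) (f ↑y))
        = Real.exp (-dist (x : V) (y : V))
    rw [← Real.exp_add, hf (x : V) (y : V)]
    ring_nf
  set v : ({v // v ∈ t} × {v // v ∈ t}) → ℝ := Function.extend ι w 0 with hvdef
  -- transfer of the two scalar quantities
  have A1 : (fun _ => (1:ℝ)) ⬝ᵥ v = (fun _ => (1:ℝ)) ⬝ᵥ w := by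
    show ∑ p, (1:ℝ) * v p = ∑ x, (1:ℝ) * w x
    calc ∑ p, (1:ℝ) * v p = ∑ p, v p * 1 := by simp [mul_comm]
      _ = ∑ x, w x * 1 := mag_sum_extend hι w (fun _ => 1)
      _ = ∑ x, (1:ℝ) * w x := by simp [mul_comm]
  have A2 : v ⬝ᵥ (K *ᵥ v) = w ⬝ᵥ (Z *ᵥ w) := by
    show ∑ p, v p * (K *ᵥ v) p = ∑ x, w x * (Z *ᵥ w) x
    rw [mag_sum_extend hι w (fun p => (K *ᵥ v) p)]
    refine Finset.sum_congr rfl fun x _ => ?_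
    congr 1
    show ∑ q, K (ι x) q * v q = (Z *ᵥ w) x
    calc ∑ q, K (ι x) q * v q = ∑ q, v q * K (ι x) q := by
          refine Finset.sum_congr rfl fun q _ => mul_comm _ _
      _ = ∑ y, w y * K (ι x) (ι y) := mag_sum_extend hι w (fun q => K (ι x) q)
      _ = ∑ y, Z x y * w y := by
          refine Finset.sum_congr rfl fun y _ => ?_
          rw [hKpull x y]; ring
      _ = (Z *ᵥ w) x := rfl
  -- put everything together
  have hq : w ⬝ᵥ (Z *ᵥ w) = (fun _ => (1:ℝ)) ⬝ᵥ w := by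
    rw [hw]; exact dotProduct_comm _ _
  have hbound := mag_quad_bound hK hub v
  have hfinal : ub ⬝ᵥ (fun _ => (1:ℝ)) = finMag t * finMag t := by
    show ∑ p : {v // v ∈ t} × {v // v ∈ t}, ub p * 1 = finMag t * finMag t
    rw [Fintype.sum_prod_type]
    have : ∀ (a b : {v // v ∈ t}), ub (a, b) * 1 = u a * u b := by
      intro a b; show (u a * u b) * 1 = _; ring
    simp_rw [this]
    rw [← Finset.sum_mul_sum, hmg_t]
    have : (fun _ => (1:ℝ)) ⬝ᵥ u = ∑ a, u a := by
      simp [dotProduct]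
    rw [this]
  rw [A1, A2, hq] at hbound
  rw [hmg_s]
  rw [hfinal] at hbound
  linarith [hbound]

/-- Magnitudes of finite subsets of a positive definite space are nonnegative. -/
lemma finMag_nonneg {V : Type*} [MetricSpace V] (hpd : IsPosDefSpace V) (s : Finset V) :
    0 ≤ finMag s := by
  letI : DecidableEq V := Classical.decEq V
  set Z : Matrix s s ℝ := simMatrix s with hZdef
  have hZ : Z.PosDef := hpd s
  set w : {v // v ∈ s} → ℝ := Z⁻¹ *ᵥ (fun _ => 1) with hwdef
  have hw : Z *ᵥ w = fun _ => 1 := by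
    rw [hwdef, Matrix.mulVec_mulVec, Matrix.mul_nonsing_inv _ hZ.det_pos.ne'.isUnit,
      Matrix.one_mulVec]
  have hmg_s : finMag s = (fun _ => (1:ℝ)) ⬝ᵥ w := by
    simp [finMag, hwdef, hZdef, dotProduct, Matrix.mulVec]
  have key := hZ.posSemidef.dotProduct_mulVec_nonneg w
  rw [star_trivial, hw] at key
  have : w ⬝ᵥ (fun _ => (1:ℝ)) = (fun _ => (1:ℝ)) ⬝ᵥ w := dotProduct_comm _ _
  rw [this] at key
  rw [hmg_s]
  exact key

/-- Monotonicity of `cMagE`. -/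
lemma cMagE_mono {X : Type*} [MetricSpace X] {K K' : Set X} (h : K ⊆ K') :
    cMagE K ≤ cMagE K' := by
  refine iSup₂_le fun s hs => ?_
  exact le_iSup₂ (f := fun (s : Finset X) (_ : (s : Set X) ⊆ K') => ENNReal.ofReal (finMag s))
    s (hs.trans h)

end Aux

/-- In a finite-dimensional, positive definite real normed vector space,
all closed balls have finite magnitude iff some closed ball of positive radius does. -/
theorem stmt_2 {V : Type*} [NormedAddCommGroup V] [NormedSpace ℝ V]
    [FiniteDimensional ℝ V] (hpd : IsPosDefSpace V) :
    (∀ (x : V) (r : ℝ), cMagE (closedBall x r) < ⊤) ↔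
      ∃ (x : V) (r : ℝ), 0 < r ∧ cMagE (closedBall x r) < ⊤ := by
  constructor
  · intro h
    exact ⟨0, 1, one_pos, h 0 1⟩
  · rintro ⟨x₀, r, hr, hfin⟩ y R
    classical
    set f : V → V := fun z => x₀ + (2⁻¹ : ℝ) • (z - x₀) with hfdef
    have hf : ∀ a b : V, dist (f a) (f b) = dist a b / 2 := by
      intro a b
      have hsub : f a - f b = (2⁻¹ : ℝ) • (a - b) := by
        simp only [hfdef]
        module
      rw [dist_eq_norm, dist_eq_norm, hsub, norm_smul]
      simp [Real.norm_eq_abs, abs_of_pos]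
      ring
    have hfx₀ : f x₀ = x₀ := by simp [hfdef]
    have hball : ∀ (ρ : ℝ) (z : V), z ∈ closedBall x₀ (2 * ρ) → f z ∈ closedBall x₀ ρ := by
      intro ρ z hz
      rw [mem_closedBall] at hz ⊢
      have h1 : dist (f z) x₀ = dist z x₀ / 2 := by
        conv_lhs => rw [← hfx₀]
        exact hf z x₀
      linarith
    have main : ∀ k : ℕ, cMagE (closedBall x₀ (2 ^ k * r)) < ⊤ := by
      intro k
      induction k with
      | zero => simpa using hfin
      | succ k ih =>
        have hsub : cMagE (closedBall x₀ (2 ^ (k + 1) * r))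
            ≤ cMagE (closedBall x₀ (2 ^ k * r)) * cMagE (closedBall x₀ (2 ^ k * r)) := by
          refine iSup₂_le fun s hs => ?_
          have hts : ∀ x ∈ s, f x ∈ s.image f := fun x hx => Finset.mem_image_of_mem f hx
          have himg : ((s.image f : Finset V) : Set V) ⊆ closedBall x₀ (2 ^ k * r) := by
            intro z hz
            rw [Finset.coe_image] at hz
            obtain ⟨z', hz', rfl⟩ := hz
            refine hball _ z' ?_
            have h2 : (2 : ℝ) * (2 ^ k * r) = 2 ^ (k + 1) * r := by ring
            rw [h2]
            exact hs hz'
          have hle : finMag s ≤ finMag (s.image f) * finMag (s.image f) :=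
            finMag_le_mul_of_half hpd hf hts
          have h0 : 0 ≤ finMag (s.image f) := finMag_nonneg hpd _
          calc ENNReal.ofReal (finMag s)
              ≤ ENNReal.ofReal (finMag (s.image f) * finMag (s.image f)) :=
                ENNReal.ofReal_le_ofReal hle
            _ = ENNReal.ofReal (finMag (s.image f)) * ENNReal.ofReal (finMag (s.image f)) :=
                ENNReal.ofReal_mul h0
            _ ≤ cMagE (closedBall x₀ (2 ^ k * r)) * cMagE (closedBall x₀ (2 ^ k * r)) := by
                refine mul_le_mul' ?_ ?_ <;>
                exact le_iSup₂ (f := fun (s : Finset V)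
                  (_ : (s : Set V) ⊆ closedBall x₀ (2 ^ k * r)) => ENNReal.ofReal (finMag s))
                  (s.image f) himg
        exact lt_of_le_of_lt hsub (ENNReal.mul_lt_top ih ih)
    obtain ⟨k, hk⟩ : ∃ k : ℕ, dist y x₀ + R ≤ 2 ^ k * r := by
      obtain ⟨k, hk⟩ := pow_unbounded_of_one_lt ((dist y x₀ + R) / r) (by norm_num : (1:ℝ) < 2)
      refine ⟨k, ?_⟩
      have := (div_lt_iff₀ hr).mp hk
      linarith
    have h1 : closedBall y R ⊆ closedBall x₀ (2 ^ k * r) :=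
      closedBall_subset_closedBall' (by linarith [dist_comm y x₀ ▸ le_refl (dist y x₀)])
    exact lt_of_le_of_lt (cMagE_mono h1) (main k)
end

section
/- Let M be a tractable metric space and A ⊆ M a subspace. Then A (with the induced metric) is tractable if and only if A is closed in M. -/
open Metric TopologicalSpace Filter Topology Bornology
open scoped ENNReal NNReal

open Matrix in
/-- Positive definiteness transfers along a submatrix by an equivalence. -/
lemma posDef_submatrix_equiv {n m : Type*} [Fintype n] [Fintype m]
    {B : Matrix n n ℝ} (hB : B.PosDef) (e : m ≃ n) : (B.submatrix e e).PosDef := by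
  exact hB.submatrix e.injective

section Subtype

variable {M : Type*} [MetricSpace M] {A : Set M}

/-- The image in `M` of a finset of the subtype `A`, with a pinned classical instance. -/
noncomputable def finsetVal (s : Finset A) : Finset M :=
  @Finset.image _ _ (Classical.decEq M) Subtype.val s

/-- The equivalence between a finset of a subtype and its image finset. -/
noncomputable def finsetSubtypeEquiv (s : Finset A) :
    {x // x ∈ s} ≃ {y // y ∈ finsetVal s} :=
  letI : DecidableEq M := Classical.decEq M
  Equiv.ofBijective (fun i => ⟨(i : A).1, Finset.mem_image_of_mem _ i.2⟩)
    ⟨fun i j h => by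
      apply Subtype.ext; apply Subtype.ext
      simpa [Subtype.ext_iff] using h,
     fun y => by
      obtain ⟨a, ha, hav⟩ := Finset.mem_image.mp y.2
      exact ⟨⟨a, ha⟩, Subtype.ext hav⟩⟩

lemma mem_finsetVal {y : M} {s : Finset A} :
    y ∈ finsetVal s ↔ ∃ a : A, a ∈ s ∧ (a : M) = y := by
  simp [finsetVal]

lemma simMatrix_subtype (s : Finset A) :
    simMatrix s = (simMatrix (finsetVal s)).submatrix
      (finsetSubtypeEquiv s) (finsetSubtypeEquiv s) := by
  ext i j
  simp [simMatrix, finsetSubtypeEquiv, Matrix.submatrix, Subtype.dist_eq, Equiv.ofBijective]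

lemma finMag_subtype (s : Finset A) : finMag s = finMag (finsetVal s) := by
  letI : DecidableEq M := Classical.decEq M
  letI : DecidableEq A := Classical.decEq A
  unfold finMag
  rw [simMatrix_subtype s]
  rw [Matrix.inv_submatrix_equiv]
  rw [← Equiv.sum_comp (finsetSubtypeEquiv s)
    (fun i => ∑ j, (simMatrix (finsetVal s))⁻¹ i j)]
  refine Finset.sum_congr rfl fun i _ => ?_
  rw [← Equiv.sum_comp (finsetSubtypeEquiv s)
    (fun j => (simMatrix (finsetVal s))⁻¹ (finsetSubtypeEquiv s i) j)]
  rfl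

lemma isPosDefSpace_subtype (h : IsPosDefSpace M) : IsPosDefSpace A := fun s => by
  rw [simMatrix_subtype s]
  exact posDef_submatrix_equiv (h _) _

end Subtype

/-- A subspace of a tractable metric space is tractable iff it is closed. -/
theorem stmt_4 {M : Type*} [MetricSpace M] (hM : Tractable M) (A : Set M) :
    Tractable A ↔ IsClosed A := by
  constructor
  · rintro ⟨-, hball, -⟩
    rw [← isSeqClosed_iff_isClosed]
    intro u x hu hx
    have h1 : ∀ᶠ n in atTop, dist (u n) x < 1 := by
      have h2 := hx
      rw [Metric.tendsto_atTop] at h2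
      obtain ⟨N, hN⟩ := h2 1 one_pos
      exact eventually_atTop.mpr ⟨N, fun n hn => hN n hn⟩
    obtain ⟨N, hN⟩ := eventually_atTop.mp h1
    have ha : u N ∈ A := hu N
    set a : A := ⟨u N, ha⟩ with ha'
    have hcomp : IsCompact (Subtype.val '' (closedBall a 2 : Set A)) :=
      Subtype.isCompact_iff.mp (hball a 2)
    have hmem : ∀ᶠ n in atTop, u n ∈ Subtype.val '' (closedBall a 2 : Set A) := by
      filter_upwards [eventually_atTop.mpr ⟨N, fun n hn => hN n hn⟩] with n hn
      refine ⟨⟨u n, hu n⟩, ?_, rfl⟩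
      rw [Metric.mem_closedBall, Subtype.dist_eq]
      calc dist (u n) (u N) ≤ dist (u n) x + dist x (u N) := dist_triangle _ _ _
        _ ≤ 1 + 1 := by
            have h2 := hN N le_rfl
            rw [dist_comm x (u N)]
            exact add_le_add hn.le h2.le
        _ = 2 := by norm_num
    have hxmem : x ∈ Subtype.val '' (closedBall a 2 : Set A) :=
      hcomp.isClosed.mem_of_tendsto hx hmem
    obtain ⟨y, -, rfl⟩ := hxmem
    exact y.2
  · intro hA
    obtain ⟨hpd, hcomp, hfin⟩ := hM
    refine ⟨isPosDefSpace_subtype hpd, ?_, ?_⟩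
    · intro x r
      rw [Subtype.isCompact_iff]
      have himg : Subtype.val '' (closedBall x r : Set A) = A ∩ closedBall (x : M) r := by
        ext y
        constructor
        · rintro ⟨z, hz, rfl⟩
          exact ⟨z.2, by rwa [Metric.mem_closedBall, ← Subtype.dist_eq]⟩
        · rintro ⟨hyA, hyb⟩
          exact ⟨⟨y, hyA⟩, by rwa [Metric.mem_closedBall, Subtype.dist_eq], rfl⟩
      rw [himg]
      exact (hcomp x r).of_isClosed_subset (hA.inter Metric.isClosed_closedBall)
        Set.inter_subset_right
    · intro x r
      refine lt_of_le_of_lt ?_ (hfin (x : M) r)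
      rw [cMagE, cMagE]
      refine iSup₂_le fun s hs => ?_
      rw [finMag_subtype s]
      refine le_trans le_rfl (le_iSup₂ (f := fun (t : Finset M)
        (_ : (t : Set M) ⊆ closedBall (x : M) r) => ENNReal.ofReal (finMag t))
        (finsetVal s) ?_)
      intro y hy
      obtain ⟨z, hz, rfl⟩ := mem_finsetVal.mp (Finset.mem_coe.mp hy)
      have h3 := hs (Finset.mem_coe.mpr hz)
      rw [Metric.mem_closedBall] at h3 ⊢
      rw [Subtype.dist_eq] at h3
      exact h3
end

section
/- Let M be a tractable metric space. Then the following are equivalent: (i) the magnitude map on nonempty compact subsets of M (with the Hausdorff metric) is continuous; (ii) for every bounded subset B ⊆ M, the magnitude map on nonempty finite subsets of B is uniformly continuous; (iii) for every x ∈ M and r > 0, the magnitude map on nonempty finite subsets of the closed ball of radius r about x is uniformly continuous. Moreover, if these hold, then the magnitude map on nonempty finite subsets of M is continuous. -/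
open Metric TopologicalSpace Filter Topology Bornology
open scoped ENNReal NNReal

section Helpers

variable {M : Type*} [MetricSpace M]

lemma cMagE_mono_s13 {s t : Set M} (h : s ⊆ t) : cMagE s ≤ cMagE t :=
  iSup₂_le fun F hF => le_iSup₂_of_le F (hF.trans h) le_rfl

lemma ofReal_finMag_le {F : Finset M} {s : Set M} (h : (F : Set M) ⊆ s) :
    ENNReal.ofReal (finMag F) ≤ cMagE s := le_iSup₂_of_le F h le_rfl

lemma finMag_empty : finMag (∅ : Finset M) = 0 := by
  simp [finMag]

lemma exists_finset_approx (K : NonemptyCompacts M)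
    (hK : cMagE (K : Set M) ≠ ⊤) {ε δ : ℝ} (hε : 0 < ε) (hδ : 0 < δ) :
    ∃ F : Finset M, F.Nonempty ∧ (F : Set M) ⊆ (K : Set M) ∧
      hausdorffDist (F : Set M) (K : Set M) ≤ δ ∧
      cMag (F : Set M) ≤ cMag (K : Set M) ∧
      cMag (K : Set M) < cMag (F : Set M) + ε := by
  classical
  obtain ⟨t, hts, htfin, hcov⟩ := K.isCompact.finite_cover_balls hδ
  have htne : t.Nonempty := by
    obtain ⟨y, hy⟩ := K.nonempty
    obtain ⟨z, hz, -⟩ := Set.mem_iUnion₂.1 (hcov hy)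
    exact ⟨z, hz⟩
  set N : Finset M := htfin.toFinset with hN
  have hNcoe : (N : Set M) = t := htfin.coe_toFinset
  have hNne : N.Nonempty := by rw [← Finset.coe_nonempty, hNcoe]; exact htne
  have hex : ∃ F₀ : Finset M, (F₀ : Set M) ⊆ (K : Set M) ∧
      cMagE (K : Set M) < ENNReal.ofReal (finMag F₀) + ENNReal.ofReal ε := by
    by_contra h
    push_neg at h
    have hεK : ENNReal.ofReal ε ≤ cMagE (K : Set M) := by
      have := h ∅ (by simp)
      simpa [finMag_empty] using this
    have hle : cMagE (K : Set M) + ENNReal.ofReal ε ≤ cMagE (K : Set M) := by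
      conv_lhs => rw [cMagE, ENNReal.iSup_add]
      refine iSup_le fun F => ?_
      by_cases hF : (F : Set M) ⊆ (K : Set M)
      · rw [iSup_pos hF]; exact h F hF
      · simpa [iSup_neg hF] using hεK
    exact absurd hle (ENNReal.lt_add_right hK (ENNReal.ofReal_pos.2 hε).ne').not_ge
  obtain ⟨F₀, hF₀sub, hF₀⟩ := hex
  refine ⟨F₀ ∪ N, hNne.mono Finset.subset_union_right, ?_, ?_, ?_, ?_⟩
  · rw [Finset.coe_union]
    exact Set.union_subset hF₀sub (by rw [hNcoe]; exact hts)
  · refine hausdorffDist_le_of_mem_dist hδ.le (fun y hy => ?_) (fun y hy => ?_)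
    · refine ⟨y, ?_, by simpa using hδ.le⟩
      revert hy
      rw [Finset.coe_union]
      rintro (hy | hy)
      · exact hF₀sub hy
      · rw [hNcoe] at hy; exact hts hy
    · obtain ⟨z, hz, hz'⟩ := Set.mem_iUnion₂.1 (hcov hy)
      refine ⟨z, ?_, (mem_ball.1 hz').le⟩
      rw [Finset.coe_union]
      exact Or.inr (by rw [hNcoe]; exact hz)
  · exact ENNReal.toReal_mono hK (cMagE_mono_s13 (by
      rw [Finset.coe_union]
      exact Set.union_subset hF₀sub (by rw [hNcoe]; exact hts)))
  · have hFle : ENNReal.ofReal (finMag F₀) ≤ cMagE ((F₀ ∪ N : Finset M) : Set M) :=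
      ofReal_finMag_le (by rw [Finset.coe_union]; exact Set.subset_union_left)
    have hFfin : cMagE ((F₀ ∪ N : Finset M) : Set M) ≠ ⊤ :=
      ((cMagE_mono_s13 (by
        rw [Finset.coe_union]
        exact Set.union_subset hF₀sub (by rw [hNcoe]; exact hts))).trans_lt
        (lt_top_iff_ne_top.2 hK)).ne
    have h2 : cMagE ((K : NonemptyCompacts M) : Set M) <
        cMagE ((F₀ ∪ N : Finset M) : Set M) + ENNReal.ofReal ε :=
      hF₀.trans_le (add_le_add hFle le_rfl)
    have := ENNReal.toReal_lt_toReal hK (by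
      exact ENNReal.add_ne_top.2 ⟨hFfin, ENNReal.ofReal_ne_top⟩) |>.2 h2
    rwa [ENNReal.toReal_add hFfin ENNReal.ofReal_ne_top, ENNReal.toReal_ofReal hε.le] at this

lemma uc_of_isEmpty {α β : Type*} [UniformSpace α] [UniformSpace β] [IsEmpty α] (f : α → β) :
    UniformContinuous f := by
  rw [UniformContinuous, Filter.filter_eq_bot_of_isEmpty (uniformity α)]
  exact tendsto_bot

lemma isCompact_setOf_subset (x : M) (r : ℝ) (hcb : IsCompact (closedBall x r)) :
    IsCompact {K : NonemptyCompacts M | (K : Set M) ⊆ closedBall x r} := by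
  haveI : CompactSpace (closedBall x r) := isCompact_iff_compactSpace.1 hcb
  set Ψ : NonemptyCompacts (closedBall x r) → NonemptyCompacts M := fun K =>
    ⟨⟨Subtype.val '' (K : Set (closedBall x r)),
      K.isCompact.image continuous_subtype_val⟩, K.nonempty.image _⟩ with hΨdef
  have hΨ : Isometry Ψ := fun a b => EMetric.hausdorffEdist_image isometry_subtype_coe
  have hS : {K : NonemptyCompacts M | (K : Set M) ⊆ closedBall x r} = Set.range Ψ := by
    ext K
    constructor
    · intro hsub
      have hcl : IsCompact (Subtype.val ⁻¹' (K : Set M) : Set (closedBall x r)) :=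
        (K.isCompact.isClosed.preimage continuous_subtype_val).isCompact
      obtain ⟨y, hy⟩ := K.nonempty
      refine ⟨⟨⟨Subtype.val ⁻¹' (K : Set M), hcl⟩, ⟨⟨y, hsub hy⟩, hy⟩⟩, ?_⟩
      apply NonemptyCompacts.ext
      exact Set.image_preimage_eq_of_subset (by rw [Subtype.range_coe]; exact hsub)
    · rintro ⟨K', rfl⟩
      rintro y ⟨z, hz, rfl⟩
      exact z.2
  rw [hS]
  exact isCompact_range hΨ.continuous

lemma A_to_B (hM2 : ∀ (x : M) (r : ℝ), IsCompact (closedBall x r))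
    (hA : Continuous fun K : NonemptyCompacts M => cMag (K : Set M))
    (B : Set M) (hB : IsBounded B) :
    UniformContinuous
      (fun F : {K : NonemptyCompacts M // (K : Set M).Finite ∧ (K : Set M) ⊆ B} =>
        cMag ((F : NonemptyCompacts M) : Set M)) := by
  cases isEmpty_or_nonempty M with
  | inl h =>
    haveI : IsEmpty {K : NonemptyCompacts M // (K : Set M).Finite ∧ (K : Set M) ⊆ B} :=
      ⟨fun F => (F.1.nonempty.elim fun x _ => h.false x)⟩
    exact uc_of_isEmpty _
  | inr h =>
    obtain ⟨x⟩ := h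
    obtain ⟨r, hr⟩ := hB.subset_closedBall x
    have hcS := isCompact_setOf_subset x r (hM2 x r)
    haveI := isCompact_iff_compactSpace.1 hcS
    have huc : UniformContinuous
        (fun K : {K : NonemptyCompacts M | (K : Set M) ⊆ closedBall x r} =>
          cMag ((K.1 : Set M))) :=
      CompactSpace.uniformContinuous_of_continuous (hA.comp continuous_subtype_val)
    show UniformContinuous ((fun K : {K : NonemptyCompacts M | (K : Set M) ⊆ closedBall x r} =>
        cMag ((K.1 : Set M))) ∘
      (fun F : {K : NonemptyCompacts M // (K : Set M).Finite ∧ (K : Set M) ⊆ B} =>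
        ⟨F.1, F.2.2.trans hr⟩))
    exact huc.comp (uniformContinuous_subtype_val.subtype_mk _)

lemma C_to_B
    (hC : ∀ (x : M) (r : ℝ), 0 < r →
      UniformContinuous
        (fun F : {K : NonemptyCompacts M //
            (K : Set M).Finite ∧ (K : Set M) ⊆ closedBall x r} =>
          cMag ((F : NonemptyCompacts M) : Set M)))
    (B : Set M) (hB : IsBounded B) :
    UniformContinuous
      (fun F : {K : NonemptyCompacts M // (K : Set M).Finite ∧ (K : Set M) ⊆ B} =>
        cMag ((F : NonemptyCompacts M) : Set M)) := by
  cases isEmpty_or_nonempty M with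
  | inl h =>
    haveI : IsEmpty {K : NonemptyCompacts M // (K : Set M).Finite ∧ (K : Set M) ⊆ B} :=
      ⟨fun F => (F.1.nonempty.elim fun x _ => h.false x)⟩
    exact uc_of_isEmpty _
  | inr h =>
    obtain ⟨x⟩ := h
    obtain ⟨r, hr0, hr⟩ := hB.subset_closedBall_lt 0 x
    show UniformContinuous ((fun F : {K : NonemptyCompacts M //
          (K : Set M).Finite ∧ (K : Set M) ⊆ closedBall x r} =>
        cMag ((F : NonemptyCompacts M) : Set M)) ∘
      (fun F : {K : NonemptyCompacts M // (K : Set M).Finite ∧ (K : Set M) ⊆ B} =>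
        ⟨F.1, F.2.1, F.2.2.trans hr⟩))
    exact (hC x r hr0).comp (uniformContinuous_subtype_val.subtype_mk _)

set_option maxHeartbeats 2000000 in
lemma B_to_A (hM : Tractable M)
    (hB : ∀ B : Set M, IsBounded B →
      UniformContinuous
        (fun F : {K : NonemptyCompacts M // (K : Set M).Finite ∧ (K : Set M) ⊆ B} =>
          cMag ((F : NonemptyCompacts M) : Set M))) :
    Continuous fun K : NonemptyCompacts M => cMag (K : Set M) := by
  rw [continuous_iff_continuousAt]
  intro K₀
  rw [Metric.continuousAt_iff]
  intro ε hε
  obtain ⟨x₀, hx₀⟩ := K₀.nonempty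
  obtain ⟨R, hR⟩ := K₀.isCompact.isBounded.subset_closedBall x₀
  have hR0 : 0 ≤ R := dist_nonneg.trans (mem_closedBall.1 (hR hx₀))
  obtain ⟨δ, hδ0, hδ⟩ := Metric.uniformContinuous_iff.1
    (hB (closedBall x₀ (R + 2)) isBounded_closedBall) (ε/3) (by linarith)
  refine ⟨min (δ/3) 1, by positivity, fun {K} hK => ?_⟩
  have hKK₀ : hausdorffDist (K : Set M) (K₀ : Set M) < min (δ/3) 1 := by
    rwa [← NonemptyCompacts.dist_eq]
  have hedist : EMetric.hausdorffEdist (K : Set M) (K₀ : Set M) ≠ ⊤ :=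
    hausdorffEdist_ne_top_of_nonempty_of_bounded K.nonempty K₀.nonempty
      K.isCompact.isBounded K₀.isCompact.isBounded
  have hK₀B : (K₀ : Set M) ⊆ closedBall x₀ (R + 2) := fun z hz => by
    have := mem_closedBall.1 (hR hz)
    exact mem_closedBall.2 (by linarith)
  have hKB : (K : Set M) ⊆ closedBall x₀ (R + 2) := by
    intro y hy
    obtain ⟨z, hz, hyz⟩ := exists_dist_lt_of_hausdorffDist_lt hy
      (hKK₀.trans_le (min_le_right _ _)) hedist
    have hz' := mem_closedBall.1 (hR hz)
    have htri := dist_triangle y z x₀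
    exact mem_closedBall.2 (by linarith)
  have hKE : cMagE (K : Set M) ≠ ⊤ := ((cMagE_mono_s13 hKB).trans_lt (hM.2.2 x₀ (R+2))).ne
  have hK₀E : cMagE (K₀ : Set M) ≠ ⊤ := ((cMagE_mono_s13 hK₀B).trans_lt (hM.2.2 x₀ (R+2))).ne
  obtain ⟨F, hFne, hFsub, hFd, hFle, hFgt⟩ :=
    exists_finset_approx K hKE (by linarith : (0:ℝ) < ε/3) (by linarith : (0:ℝ) < δ/6)
  obtain ⟨F', hF'ne, hF'sub, hF'd, hF'le, hF'gt⟩ :=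
    exists_finset_approx K₀ hK₀E (by linarith : (0:ℝ) < ε/3) (by linarith : (0:ℝ) < δ/6)
  set KF : NonemptyCompacts M :=
    ⟨⟨(F : Set M), F.finite_toSet.isCompact⟩, Finset.coe_nonempty.2 hFne⟩ with hKF
  set KF' : NonemptyCompacts M :=
    ⟨⟨(F' : Set M), F'.finite_toSet.isCompact⟩, Finset.coe_nonempty.2 hF'ne⟩ with hKF'
  have h1 : dist KF K ≤ δ/6 := by rw [NonemptyCompacts.dist_eq]; exact hFd
  have h2 : dist K K₀ < δ/3 := hK.trans_le (min_le_left _ _)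
  have h3 : dist K₀ KF' ≤ δ/6 := by
    rw [NonemptyCompacts.dist_eq, hausdorffDist_comm]; exact hF'd
  have htri := dist_triangle4 KF K K₀ KF'
  have hdFF' : dist
      (⟨KF, F.finite_toSet, hFsub.trans hKB⟩ :
        {K : NonemptyCompacts M // (K : Set M).Finite ∧
          (K : Set M) ⊆ closedBall x₀ (R + 2)})
      (⟨KF', F'.finite_toSet, hF'sub.trans hK₀B⟩) < δ := by
    rw [Subtype.dist_eq]
    show dist KF KF' < δ
    linarith
  have hg := hδ hdFF'
  simp only [hKF, hKF', NonemptyCompacts.coe_mk, TopologicalSpace.Compacts.coe_mk] at hg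
  rw [Real.dist_eq] at hg ⊢
  have hg' := abs_lt.1 hg
  rw [abs_sub_lt_iff]
  constructor <;> linarith [hg'.1, hg'.2]

end Helpers

/-- For a tractable metric space `M`, continuity of the magnitude map on
nonempty compact subsets is equivalent to uniform continuity of magnitude on nonempty
finite subsets of every bounded `B ⊆ M`, and to uniform continuity of magnitude on
nonempty finite subsets of every closed ball; moreover these imply continuity of the
magnitude map on nonempty finite subsets of `M`. -/
theorem stmt_13 {M : Type*} [MetricSpace M] (hM : Tractable M) :
    ((Continuous fun K : NonemptyCompacts M => cMag (K : Set M)) ↔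
      (∀ B : Set M, IsBounded B →
        UniformContinuous
          (fun F : {K : NonemptyCompacts M // (K : Set M).Finite ∧ (K : Set M) ⊆ B} =>
            cMag ((F : NonemptyCompacts M) : Set M)))) ∧
    ((∀ B : Set M, IsBounded B →
        UniformContinuous
          (fun F : {K : NonemptyCompacts M // (K : Set M).Finite ∧ (K : Set M) ⊆ B} =>
            cMag ((F : NonemptyCompacts M) : Set M))) ↔
      (∀ (x : M) (r : ℝ), 0 < r →
        UniformContinuous
          (fun F : {K : NonemptyCompacts M //
              (K : Set M).Finite ∧ (K : Set M) ⊆ closedBall x r} =>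
            cMag ((F : NonemptyCompacts M) : Set M)))) ∧
    ((Continuous fun K : NonemptyCompacts M => cMag (K : Set M)) →
      Continuous fun F : {K : NonemptyCompacts M // (K : Set M).Finite} =>
        cMag ((F : NonemptyCompacts M) : Set M)) := by
  refine ⟨⟨fun hA => A_to_B hM.2.1 hA, fun hB => B_to_A hM hB⟩,
    ⟨fun hB x r _ => hB _ isBounded_closedBall, fun hC => C_to_B hC⟩,
    fun hA => hA.comp continuous_subtype_val⟩
end

section
/- The magnitude map on nonempty compact subsets of [0, ∞) ⊆ ℝ, equipped with the Hausdorff metric, is not uniformly continuous; likewise, the magnitude map on nonempty finite subsets of [0, ∞) is not uniformly continuous. In fact, for every ε > 0 and every δ > 0 there exist a nonempty finite set A ⊆ [0, ∞) and a nonempty compact set B ⊆ [0, ∞) with d_H(A, B) = δ and mg(B) − mg(A) > ε. -/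
open Metric TopologicalSpace Filter Topology Bornology
open scoped ENNReal NNReal

noncomputable def phiMag (d : ℝ) : ℝ := (1 - Real.exp (-d)) / (1 + Real.exp (-d))

lemma one_add_exp_pos (d : ℝ) : 0 < 1 + Real.exp (-d) := by positivity

lemma phiMag_nonneg {d : ℝ} (hd : 0 ≤ d) : 0 ≤ phiMag d := by
  have h1 : Real.exp (-d) ≤ 1 := Real.exp_le_one_iff.mpr (by linarith)
  exact div_nonneg (by linarith) (one_add_exp_pos d).le

lemma phiMag_mono {a b : ℝ} (hab : a ≤ b) : phiMag a ≤ phiMag b := by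
  have h1 : Real.exp (-b) ≤ Real.exp (-a) := Real.exp_le_exp.mpr (by linarith)
  have h2 := Real.exp_pos (-a)
  have h3 := Real.exp_pos (-b)
  unfold phiMag
  rw [div_le_div_iff₀ (one_add_exp_pos a) (one_add_exp_pos b)]
  nlinarith

lemma phiMag_add_le {a b : ℝ} (ha : 0 ≤ a) (hb : 0 ≤ b) :
    phiMag (a + b) ≤ phiMag a + phiMag b := by
  have hu : Real.exp (-a) ≤ 1 := Real.exp_le_one_iff.mpr (by linarith)
  have hv : Real.exp (-b) ≤ 1 := Real.exp_le_one_iff.mpr (by linarith)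
  have hu0 := Real.exp_pos (-a)
  have hv0 := Real.exp_pos (-b)
  have hab : Real.exp (-(a+b)) = Real.exp (-a) * Real.exp (-b) := by
    rw [← Real.exp_add]; ring_nf
  unfold phiMag
  rw [hab]
  set u := Real.exp (-a)
  set v := Real.exp (-b)
  rw [div_add_div _ _ (by positivity) (by positivity),
    div_le_div_iff₀ (by positivity) (by positivity)]
  nlinarith [mul_nonneg (mul_nonneg (sub_nonneg.mpr hu) (sub_nonneg.mpr hv))
    (sub_nonneg.mpr (by nlinarith : u*v ≤ 1))]

lemma phiMag_nat_mul_le {h : ℝ} (hh : 0 ≤ h) (k : ℕ) : phiMag (k * h) ≤ k * phiMag h := by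
  induction k with
  | zero => simp [phiMag]
  | succ n ih =>
      have e : ((n+1 : ℕ) : ℝ) * h = n*h + h := by push_cast; ring
      rw [e]
      calc phiMag (n*h + h) ≤ phiMag (n*h) + phiMag h := phiMag_add_le (by positivity) hh
        _ ≤ n * phiMag h + phiMag h := by linarith
        _ = (n+1 : ℕ) * phiMag h := by push_cast; ring

lemma phiMag_gap_pos {d : ℝ} (hd : 0 < d) : 0 < 2 * phiMag d - phiMag (2*d) := by
  have hu : Real.exp (-d) < 1 := Real.exp_lt_one_iff.mpr (by linarith)
  have hu0 := Real.exp_pos (-d)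
  have h2 : Real.exp (-(2*d)) = Real.exp (-d) * Real.exp (-d) := by
    rw [← Real.exp_add]; ring_nf
  unfold phiMag
  rw [h2]
  set u := Real.exp (-d)
  have key : 2 * ((1-u)/(1+u)) - (1 - u*u)/(1+u*u) = (1-u)^3 / ((1+u)*(1+u*u)) := by
    field_simp
    ring
  rw [key]
  have h1u : (0:ℝ) < 1 - u := by linarith
  have e3 : (1-u)^3 = (1-u)*(1-u)*(1-u) := by ring
  exact div_pos (by positivity) (by positivity)

noncomputable def expMat {n : ℕ} (x : Fin n → ℝ) : Matrix (Fin n) (Fin n) ℝ :=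
  fun i j => Real.exp (-|x i - x j|)

lemma expMat_symm {n : ℕ} (x : Fin n → ℝ) (i j : Fin n) : expMat x i j = expMat x j i := by
  simp [expMat, abs_sub_comm]

lemma expMat_diag {n : ℕ} (x : Fin n → ℝ) (i : Fin n) : expMat x i i = 1 := by
  simp [expMat]

lemma expMat_inv_exists (n : ℕ) : ∀ (x : Fin (n+1) → ℝ), StrictMono x →
    ∃ N : Matrix (Fin (n+1)) (Fin (n+1)) ℝ, expMat x * N = 1 ∧
      ∑ i, ∑ j, N i j = 1 + ∑ i : Fin n, phiMag (x i.succ - x i.castSucc) := by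
  induction n with
  | zero =>
      intro x _
      have hone : expMat x = 1 := by
        ext i j
        have hij : i = j := Fin.ext (by omega)
        rw [hij, expMat_diag, Matrix.one_apply_eq]
      refine ⟨1, by rw [hone, one_mul], by simp⟩
  | succ n ih =>
      intro x hx
      set y : Fin (n+1) → ℝ := fun i => x i.castSucc with hy_def
      have hy : StrictMono y := hx.comp Fin.strictMono_castSucc
      obtain ⟨N, hMN, hsum⟩ := ih y hy
      set L : Fin (n+2) := Fin.last (n+1) with hL
      set L' : Fin (n+1) := Fin.last n with hL'
      set P : Fin (n+2) := (Fin.last n).castSucc with hP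
      set d : ℝ := x L - x P with hd_def
      have hd : 0 < d := sub_pos.mpr (hx (Fin.castSucc_lt_last L'))
      set t : ℝ := Real.exp (-d) with ht_def
      have ht0 : 0 < t := Real.exp_pos _
      have ht1 : t < 1 := Real.exp_lt_one_iff.mpr (by linarith)
      have hs : 0 < 1 - t^2 := by nlinarith
      set c1 : ℝ := 1/(1-t^2) with hc1
      set c2 : ℝ := -t/(1-t^2) with hc2
      set c3 : ℝ := t^2/(1-t^2) with hc3
      set N' : Matrix (Fin (n+2)) (Fin (n+2)) ℝ := fun i j =>
        if hi : i = L then (if j = L then c1 else if j = P then c2 else 0)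
        else if hj : j = L then (if i = P then c2 else 0)
        else N (i.castPred hi) (j.castPred hj) +
          (if i = P ∧ j = P then c3 else 0) with hN'
      have hneL : ∀ k : Fin (n+1), k.castSucc ≠ L := fun k => (Fin.castSucc_lt_last k).ne
      have hPk : ∀ k : Fin (n+1), (k.castSucc = P) ↔ k = L' := by
        intro k; rw [hP, Fin.castSucc_inj]
      have hLP : L ≠ P := (Fin.castSucc_lt_last L').ne'
      have hE1 : ∀ k j' : Fin (n+1), N' k.castSucc j'.castSucc
          = N k j' + (if k = L' ∧ j' = L' then c3 else 0) := by
        intro k j'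
        rw [hN']
        simp only [dif_neg (hneL k), dif_neg (hneL j'), Fin.castPred_castSucc, hPk]
      have hE2 : ∀ k : Fin (n+1), N' k.castSucc L = if k = L' then c2 else 0 := by
        intro k
        rw [hN']
        simp [hneL k, hPk, hLP, hLP.symm]
      have hE3 : ∀ j' : Fin (n+1), N' L j'.castSucc = if j' = L' then c2 else 0 := by
        intro j'
        rw [hN']
        simp [hneL j', hPk, hLP, hLP.symm]
      have hE4 : N' L L = c1 := by rw [hN']; simp
      have hM1 : ∀ i j : Fin (n+1), expMat x i.castSucc j.castSucc = expMat y i j :=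
        fun i j => rfl
      have hxP : ∀ i : Fin (n+1), x i.castSucc ≤ x P := fun i =>
        hx.monotone (Fin.castSucc_le_castSucc_iff.mpr (Fin.le_last i))
      have hM2 : ∀ i : Fin (n+1), expMat x i.castSucc L = t * expMat y i L' := by
        intro i
        have h1 : x i.castSucc ≤ x P := hxP i
        have h2 : x P ≤ x L := by linarith
        have e1 : |x i.castSucc - x L| = d + (x P - x i.castSucc) := by
          rw [abs_sub_comm, abs_of_nonneg (by linarith)]; rw [hd_def]; ring
        have e2 : |y i - y L'| = x P - x i.castSucc := by
          show |x i.castSucc - x L'.castSucc| = x P - x i.castSucc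
          rw [abs_sub_comm, abs_of_nonneg (by linarith [hxP i])]
        show Real.exp (-|x i.castSucc - x L|) = t * Real.exp (-|y i - y L'|)
        rw [e1, e2, ht_def, ← Real.exp_add]
        ring_nf
      have hM3 : ∀ j : Fin (n+1), expMat x L j.castSucc = t * expMat y L' j := by
        intro j
        rw [expMat_symm, hM2 j, expMat_symm y]
      have hM4 : expMat x L L = 1 := expMat_diag x L
      have hMyd : expMat y L' L' = 1 := expMat_diag y L'
      have hMxt : expMat x L L'.castSucc = t := by rw [hM3, hMyd, mul_one]
      have key : expMat x * N' = 1 := by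
        ext i j
        rw [Matrix.mul_apply, Fin.sum_univ_castSucc]
        induction j using Fin.lastCases with
        | last =>
            simp only [← hL, hE2, hE4, mul_ite, mul_zero, Finset.sum_ite_eq',
              Finset.mem_univ, if_true]
            induction i using Fin.lastCases with
            | last =>
                rw [← hL, hMxt, hM4, Matrix.one_apply_eq, hc1, hc2]
                field_simp
                ring
            | cast i' =>
                rw [hM2 i', hM1 i' L', Matrix.one_apply_ne (hneL i'), hc1, hc2]
                field_simp
                ring
        | cast j' =>
            have hsplit :
                ∑ k : Fin (n+1), expMat x i k.castSucc * N' k.castSucc j'.castSucc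
                  = (∑ k : Fin (n+1), expMat x i k.castSucc * N k j')
                    + (if j' = L' then expMat x i L'.castSucc * c3 else 0) := by
              simp only [hE1, mul_add]
              rw [Finset.sum_add_distrib]
              congr 1
              by_cases hj' : j' = L'
              · subst hj'
                simp only [and_true, mul_ite, mul_zero, Finset.sum_ite_eq',
                  Finset.mem_univ, if_true]
              · simp [hj']
            rw [hsplit, hE3]
            induction i using Fin.lastCases with
            | last =>
                rw [← hL]
                have hrw : ∑ k : Fin (n+1), expMat x L k.castSucc * N k j'
                    = t * ∑ k : Fin (n+1), expMat y L' k * N k j' := by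
                  rw [Finset.mul_sum]
                  exact Finset.sum_congr rfl fun k _ => by rw [hM3 k]; ring
                rw [hrw, ← Matrix.mul_apply, hMN, hMxt, hM4,
                  Matrix.one_apply_ne' (hneL j'), one_mul]
                by_cases hj' : j' = L'
                · subst hj'
                  rw [Matrix.one_apply_eq, if_pos rfl, if_pos rfl, hc2, hc3]
                  field_simp
                  ring
                · rw [Matrix.one_apply_ne' hj', if_neg hj', if_neg hj']
                  ring
            | cast i' =>
                have hrw : ∑ k : Fin (n+1), expMat x i'.castSucc k.castSucc * N k j'
                    = (expMat y * N) i' j' := by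
                  rw [Matrix.mul_apply]
                  exact Finset.sum_congr rfl fun k _ => by rw [hM1]
                rw [hrw, hMN, hM1 i' L', hM2 i']
                have hone : (1 : Matrix (Fin (n+2)) (Fin (n+2)) ℝ) i'.castSucc j'.castSucc
                    = (1 : Matrix (Fin (n+1)) (Fin (n+1)) ℝ) i' j' := by
                  simp [Matrix.one_apply, Fin.castSucc_inj]
                rw [hone]
                by_cases hj' : j' = L'
                · subst hj'
                  rw [if_pos rfl, if_pos rfl, hc2, hc3]
                  field_simp
                  try ring
                · rw [if_neg hj', if_neg hj']
                  ring
      refine ⟨N', key, ?_⟩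
      rw [Fin.sum_univ_castSucc (f := fun i => ∑ j, N' i j)]
      have hrow : ∀ i' : Fin (n+1), ∑ j, N' i'.castSucc j
          = (∑ j' : Fin (n+1), N i' j') + (if i' = L' then c3 + c2 else 0) := by
        intro i'
        rw [Fin.sum_univ_castSucc (f := fun j => N' i'.castSucc j)]
        simp only [← hL, hE1, hE2]
        rw [Finset.sum_add_distrib]
        by_cases hi' : i' = L'
        · subst hi'
          simp only [true_and, Finset.sum_ite_eq', Finset.mem_univ, if_true, if_pos rfl]
          ring
        · simp [hi']
      have hlast : ∑ j, N' L j = c2 + c1 := by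
        rw [Fin.sum_univ_castSucc (f := fun j => N' L j)]
        simp only [← hL, hE3, hE4, Finset.sum_ite_eq', Finset.mem_univ, if_true]
      rw [hlast]
      rw [Finset.sum_congr rfl fun i' _ => hrow i']
      rw [Finset.sum_add_distrib, hsum]
      simp only [Finset.sum_ite_eq', Finset.mem_univ, if_true]
      have hphi : c3 + c2 + (c2 + c1) = phiMag d := by
        rw [hc1, hc2, hc3, phiMag, ← ht_def]
        have h1t : 1 + t ≠ 0 := by nlinarith
        have h2t : 1 - t^2 ≠ 0 := by nlinarith
        field_simp
        try ring
      have hgaps : ∑ i : Fin (n+1), phiMag (x i.succ - x i.castSucc)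
          = (∑ i : Fin n, phiMag (y i.succ - y i.castSucc)) + phiMag d := by
        rw [Fin.sum_univ_castSucc (f := fun i => phiMag (x i.succ - x i.castSucc))]
        have e2 : (Fin.last n).succ = Fin.last (n+1) := Fin.succ_last n
        have e3 : ∀ i : Fin n, phiMag (x i.castSucc.succ - x i.castSucc.castSucc)
            = phiMag (y i.succ - y i.castSucc) := by
          intro i
          have h1 : y i.succ = x i.succ.castSucc := rfl
          have h2 : y i.castSucc = x i.castSucc.castSucc := rfl
          rw [h1, h2, Fin.succ_castSucc]
        rw [Finset.sum_congr rfl fun i _ => e3 i, e2]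
      rw [hgaps, ← hphi]
      ring

lemma finMag_formula {X : Type*} [MetricSpace X] [LinearOrder X] (f : X → ℝ)
    (hf : StrictMono f) (hd : ∀ a b : X, dist a b = |f a - f b|)
    (s : Finset X) {n : ℕ} (hcard : s.card = n+1) :
    finMag s = 1 + ∑ i : Fin n,
      phiMag (f ((s.orderIsoOfFin hcard) i.succ : X)
        - f ((s.orderIsoOfFin hcard) i.castSucc : X)) := by
  letI : DecidableEq X := Classical.decEq X
  set e : Fin (n+1) ≃ ↥s := (s.orderIsoOfFin hcard).toEquiv with he
  set x : Fin (n+1) → ℝ := fun i => f ((s.orderIsoOfFin hcard) i : X) with hx_def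
  have hx : StrictMono x := by
    intro i j hij
    exact hf (Subtype.coe_lt_coe.mpr ((s.orderIsoOfFin hcard).strictMono hij))
  obtain ⟨N, hMN, hsum⟩ := expMat_inv_exists n x hx
  have hsim : simMatrix s = (expMat x).submatrix e.symm e.symm := by
    ext a b
    simp only [simMatrix, expMat, Matrix.submatrix_apply]
    congr 1
    have ha : (e (e.symm a) : X) = (a : X) := by rw [Equiv.apply_symm_apply]
    have hb : (e (e.symm b) : X) = (b : X) := by rw [Equiv.apply_symm_apply]
    have hxa : x (e.symm a) = f (a : X) := by rw [hx_def]; simp only []; rw [← ha]; rfl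
    have hxb : x (e.symm b) = f (b : X) := by rw [hx_def]; simp only []; rw [← hb]; rfl
    rw [hd, hxa, hxb]
  have hinv : (simMatrix s)⁻¹ = N.submatrix e.symm e.symm := by
    apply Matrix.inv_eq_right_inv
    rw [hsim, Matrix.submatrix_mul_equiv, hMN, Matrix.submatrix_one_equiv]
  unfold finMag
  rw [hinv, ← hsum]
  refine Fintype.sum_equiv e.symm _ _ fun a => ?_
  exact Fintype.sum_equiv e.symm _ _ fun b => rfl

lemma finMag_le_grid {X : Type*} [MetricSpace X] [LinearOrder X] (f : X → ℝ)
    (hf : StrictMono f) (hd : ∀ a b : X, dist a b = |f a - f b|)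
    {h : ℝ} (hh : 0 < h) (M : ℕ) (s : Finset X) (hne : s.Nonempty)
    (hmem : ∀ a ∈ s, ∃ k : ℕ, k ≤ M ∧ f a = h * k) :
    finMag s ≤ 1 + M * phiMag h := by
  obtain ⟨n, hn⟩ : ∃ n, s.card = n + 1 :=
    ⟨s.card - 1, by have := Finset.card_pos.mpr hne; omega⟩
  rw [finMag_formula f hf hd s hn]
  set E : Fin (n+1) → X := fun i => ((s.orderIsoOfFin hn) i : X) with hE
  have hEs : ∀ i, E i ∈ s := fun i => ((s.orderIsoOfFin hn) i).2
  choose m hm1 hm2 using fun i => hmem (E i) (hEs i)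
  have hxsm : StrictMono (fun i => f (E i)) := by
    intro i j hij
    exact hf (Subtype.coe_lt_coe.mpr ((s.orderIsoOfFin hn).strictMono hij))
  have hmsm : StrictMono m := by
    intro i j hij
    have hlt : f (E i) < f (E j) := hxsm hij
    rw [hm2 i, hm2 j] at hlt
    have hc : (m i : ℝ) < m j := (mul_lt_mul_iff_right₀ hh).mp hlt
    exact_mod_cast hc
  have hgap : ∀ i : Fin n, phiMag (f (E i.succ) - f (E i.castSucc))
      ≤ ((m i.succ : ℝ) - m i.castSucc) * phiMag h := by
    intro i
    have hlt : m i.castSucc < m i.succ := hmsm (Fin.castSucc_lt_succ : i.castSucc < i.succ)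
    have hgapeq : f (E i.succ) - f (E i.castSucc)
        = ((m i.succ - m i.castSucc : ℕ) : ℝ) * h := by
      rw [hm2, hm2, Nat.cast_sub hlt.le]
      ring
    rw [hgapeq]
    have := phiMag_nat_mul_le hh.le (m i.succ - m i.castSucc)
    calc phiMag (((m i.succ - m i.castSucc : ℕ) : ℝ) * h)
        ≤ ((m i.succ - m i.castSucc : ℕ) : ℝ) * phiMag h := this
      _ = ((m i.succ : ℝ) - m i.castSucc) * phiMag h := by
          rw [Nat.cast_sub hlt.le]
  have htel : ∑ i : Fin n, ((m i.succ : ℝ) - m i.castSucc)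
      = (m (Fin.last n) : ℝ) - m 0 := by
    set w : ℕ → ℝ := fun k => if hk : k < n+1 then (m ⟨k, hk⟩ : ℝ) else 0 with hw
    have h1 : ∀ i : Fin n, (m i.succ : ℝ) - m i.castSucc = w (i.val + 1) - w i.val := by
      intro i
      have hi1 : i.val + 1 < n + 1 := by omega
      have hi2 : i.val < n + 1 := by omega
      rw [hw]
      simp only [dif_pos hi1, dif_pos hi2]
      congr 2
    rw [Finset.sum_congr rfl fun i _ => h1 i]
    rw [Fin.sum_univ_eq_sum_range (fun k => w (k+1) - w k) n, Finset.sum_range_sub]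
    rw [hw]
    simp only [dif_pos (by omega : n < n+1), dif_pos (by omega : 0 < n+1)]
    congr 2
  calc 1 + ∑ i : Fin n, phiMag (f (E i.succ) - f (E i.castSucc))
      ≤ 1 + ∑ i : Fin n, ((m i.succ : ℝ) - m i.castSucc) * phiMag h := by
        refine add_le_add_right (Finset.sum_le_sum fun i _ => hgap i) 1
    _ = 1 + ((m (Fin.last n) : ℝ) - m 0) * phiMag h := by rw [← Finset.sum_mul, htel]
    _ ≤ 1 + M * phiMag h := by
        have h1 : (m (Fin.last n) : ℝ) ≤ M := by exact_mod_cast hm1 (Fin.last n)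
        have h2 : (0:ℝ) ≤ m 0 := Nat.cast_nonneg _
        have := phiMag_nonneg hh.le
        nlinarith

lemma finMag_ge_sep {X : Type*} [MetricSpace X] [LinearOrder X] (f : X → ℝ)
    (hf : StrictMono f) (hd : ∀ a b : X, dist a b = |f a - f b|)
    {h : ℝ} (hh : 0 < h) {n : ℕ} (s : Finset X) (hcard : s.card = n+1)
    (hsep : ∀ a ∈ s, ∀ b ∈ s, a ≠ b → h ≤ dist a b) :
    1 + n * phiMag h ≤ finMag s := by
  rw [finMag_formula f hf hd s hcard]
  have hgap : ∀ i : Fin n, phiMag h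
      ≤ phiMag (f ((s.orderIsoOfFin hcard) i.succ : X)
          - f ((s.orderIsoOfFin hcard) i.castSucc : X)) := by
    intro i
    set a := (s.orderIsoOfFin hcard) i.castSucc with ha
    set b := (s.orderIsoOfFin hcard) i.succ with hb
    have hab : (a : X) < (b : X) :=
      Subtype.coe_lt_coe.mpr ((s.orderIsoOfFin hcard).strictMono (Fin.castSucc_lt_succ : i.castSucc < i.succ))
    have hne : (a : X) ≠ (b : X) := hab.ne
    have hsep' : h ≤ dist (a : X) (b : X) := hsep _ a.2 _ b.2 hne
    rw [hd] at hsep'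
    have hfab : f (a : X) < f (b : X) := hf hab
    rw [abs_sub_comm, abs_of_nonneg (by linarith)] at hsep'
    exact phiMag_mono hsep'
  have : (n : ℝ) * phiMag h ≤ ∑ i : Fin n,
      phiMag (f ((s.orderIsoOfFin hcard) i.succ : X)
        - f ((s.orderIsoOfFin hcard) i.castSucc : X)) := by
    calc (n : ℝ) * phiMag h = ∑ _i : Fin n, phiMag h := by
          rw [Finset.sum_const, Finset.card_univ, Fintype.card_fin, nsmul_eq_mul]
      _ ≤ _ := Finset.sum_le_sum fun i _ => hgap i
  linarith

lemma cMagE_le_of {X : Type*} [MetricSpace X] {K : Set X} {c : ℝ} (hc : 0 ≤ c)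
    (hb : ∀ s : Finset X, (s : Set X) ⊆ K → s.Nonempty → finMag s ≤ c) :
    cMagE K ≤ ENNReal.ofReal c := by
  rw [cMagE]
  refine iSup₂_le fun s hs => ?_
  rcases s.eq_empty_or_nonempty with rfl | hne
  · have : finMag (∅ : Finset X) = 0 := by
      unfold finMag
      simp
    rw [this]
    simp
  · exact ENNReal.ofReal_le_ofReal (hb s hs hne)

lemma le_cMag_of {X : Type*} [MetricSpace X] {K : Set X} (s : Finset X)
    (hs : (s : Set X) ⊆ K) (h1 : 0 ≤ finMag s) (hK : cMagE K ≠ ⊤) :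
    finMag s ≤ cMag K := by
  have h2 : ENNReal.ofReal (finMag s) ≤ cMagE K := by
    rw [cMagE]
    exact le_iSup₂_of_le s hs le_rfl
  calc finMag s = (ENNReal.ofReal (finMag s)).toReal := (ENNReal.toReal_ofReal h1).symm
    _ ≤ cMag K := ENNReal.toReal_mono hK h2

lemma cMag_le_of {X : Type*} [MetricSpace X] {K : Set X} {c : ℝ} (hc : 0 ≤ c)
    (h : cMagE K ≤ ENNReal.ofReal c) : cMag K ≤ c :=
  ENNReal.toReal_le_of_le_ofReal hc h

lemma le_infDist_of {X : Type*} [MetricSpace X] (x : X) (s : Set X) (hs : s.Nonempty)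
    {d : ℝ} (h : ∀ y ∈ s, d ≤ dist x y) : d ≤ infDist x s := by
  rcases le_or_gt d 0 with hd0 | hd0
  · exact hd0.trans infDist_nonneg
  apply (ENNReal.ofReal_le_iff_le_toReal (infEdist_ne_top hs)).mp
  apply EMetric.le_infEdist.mpr
  intro y hy
  calc ENNReal.ofReal d ≤ ENNReal.ofReal (dist x y) := ENNReal.ofReal_le_ofReal (h y hy)
    _ = edist x y := (edist_dist x y).symm

noncomputable def gridB {X : Type*} [DecidableEq X] (pt : ℕ → X) (N : ℕ) : Finset X :=
  (Finset.range (2*N+1)).image pt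

noncomputable def gridA {X : Type*} [DecidableEq X] (pt : ℕ → X) (N : ℕ) : Finset X :=
  (Finset.range (N+1)).image (fun k => pt (2*k))

section Grid

variable {X : Type*} [MetricSpace X] [LinearOrder X] [DecidableEq X] (f : X → ℝ)
  (hf : StrictMono f) (hd : ∀ a b : X, dist a b = |f a - f b|)
  {τ : ℝ} (hτ : 0 < τ) (N : ℕ) (pt : ℕ → X) (hpt : ∀ k, f (pt k) = τ * k)

include hf hd hτ hpt

lemma pt_inj : Function.Injective pt := by
  intro k l hkl
  have : τ * (k:ℝ) = τ * l := by rw [← hpt, ← hpt, hkl]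
  have := (mul_left_cancel₀ (ne_of_gt hτ)) this
  exact_mod_cast this

lemma dist_pt (k l : ℕ) : dist (pt k) (pt l) = τ * |(k:ℝ) - l| := by
  rw [hd, hpt, hpt, ← mul_sub, abs_mul, abs_of_pos hτ]

lemma cMagA_le : cMagE (↑(gridA pt N) : Set X) ≤ ENNReal.ofReal (1 + N * phiMag (2*τ)) := by
  have hphi := phiMag_nonneg (by linarith : (0:ℝ) ≤ 2*τ)
  apply cMagE_le_of (by positivity)
  intro s hs hne
  apply finMag_le_grid f hf hd (by linarith : (0:ℝ) < 2*τ) N s hne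
  intro a ha
  have : a ∈ gridA pt N := Finset.mem_coe.mp (hs ha)
  rw [gridA] at this
  obtain ⟨k, hk, rfl⟩ := Finset.mem_image.mp this
  refine ⟨k, by have := Finset.mem_range.mp hk; omega, ?_⟩
  rw [hpt]
  push_cast
  ring

lemma cMagB_le : cMagE (↑(gridB pt N) : Set X) ≤ ENNReal.ofReal (1 + ((2*N : ℕ) : ℝ) * phiMag τ) := by
  have hphi := phiMag_nonneg hτ.le
  apply cMagE_le_of (by positivity)
  intro s hs hne
  apply finMag_le_grid f hf hd hτ (2*N) s hne
  intro a ha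
  have : a ∈ gridB pt N := Finset.mem_coe.mp (hs ha)
  rw [gridB] at this
  obtain ⟨k, hk, rfl⟩ := Finset.mem_image.mp this
  refine ⟨k, by have := Finset.mem_range.mp hk; omega, hpt k⟩

lemma cMagB_ge : (1 : ℝ) + ((2*N : ℕ) : ℝ) * phiMag τ ≤ cMag (↑(gridB pt N) : Set X) := by
  have hcard : (gridB pt N).card = 2*N + 1 := by
    rw [gridB, Finset.card_image_of_injective _ (pt_inj f hf hd hτ pt hpt), Finset.card_range]
  have hsep : ∀ a ∈ gridB pt N, ∀ b ∈ gridB pt N, a ≠ b → τ ≤ dist a b := by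
    intro a ha b hb hab
    rw [gridB] at ha hb
    obtain ⟨k, _, rfl⟩ := Finset.mem_image.mp ha
    obtain ⟨l, _, rfl⟩ := Finset.mem_image.mp hb
    have hkl : k ≠ l := fun h => hab (by rw [h])
    rw [dist_pt f hf hd hτ pt hpt]
    have : (1:ℝ) ≤ |(k:ℝ) - l| := by
      have : (k:ℝ) ≠ l := by exact_mod_cast hkl
      have h1 : ((k:ℤ):ℝ) - ((l:ℤ):ℝ) = ((k - l : ℤ) : ℝ) := by push_cast; ring
      rw [show (k:ℝ) - (l:ℝ) = ((k - l : ℤ) : ℝ) by push_cast; ring]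
      rw [← Int.cast_abs]
      exact_mod_cast Int.one_le_abs (by omega : (k:ℤ) - l ≠ 0)
    nlinarith
  have h1 := finMag_ge_sep f hf hd hτ (gridB pt N) hcard hsep
  have hfin : cMagE (↑(gridB pt N) : Set X) ≠ ⊤ :=
    ne_top_of_le_ne_top ENNReal.ofReal_ne_top (cMagB_le f hf hd hτ N pt hpt)
  have h2 := le_cMag_of (gridB pt N) (subset_refl _)
    (le_trans (by have := phiMag_nonneg hτ.le; positivity) h1) hfin
  calc (1:ℝ) + ((2*N : ℕ) : ℝ) * phiMag τ ≤ finMag (gridB pt N) := by exact_mod_cast h1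
    _ ≤ cMag _ := h2

lemma cMag_diff_ge :
    (N : ℝ) * (2 * phiMag τ - phiMag (2*τ)) ≤
      cMag (↑(gridB pt N) : Set X) - cMag (↑(gridA pt N) : Set X) := by
  have h1 := cMagB_ge f hf hd hτ N pt hpt
  have h2 : cMag (↑(gridA pt N) : Set X) ≤ 1 + N * phiMag (2*τ) := by
    have hphi := phiMag_nonneg (by linarith : (0:ℝ) ≤ 2*τ)
    exact cMag_le_of (by positivity) (cMagA_le f hf hd hτ N pt hpt)
  have : (1:ℝ) + ((2*N : ℕ) : ℝ) * phiMag τ - (1 + N * phiMag (2*τ))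
      = N * (2 * phiMag τ - phiMag (2*τ)) := by push_cast; ring
  linarith

lemma grid_hausdorff_le : hausdorffDist (↑(gridA pt N) : Set X) (↑(gridB pt N) : Set X) ≤ τ := by
  apply hausdorffDist_le_of_mem_dist hτ.le
  · intro x hx
    have hx' : x ∈ gridA pt N := Finset.mem_coe.mp hx
    rw [gridA] at hx'
    obtain ⟨k, hk, rfl⟩ := Finset.mem_image.mp hx'
    refine ⟨pt (2*k), ?_, ?_⟩
    · apply Finset.mem_coe.mpr
      rw [gridB]
      apply Finset.mem_image_of_mem
      rw [Finset.mem_range] at hk ⊢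
      omega
    · simp [dist_self, hτ.le]
  · intro x hx
    have hx' : x ∈ gridB pt N := Finset.mem_coe.mp hx
    rw [gridB] at hx'
    obtain ⟨k, hk, rfl⟩ := Finset.mem_image.mp hx'
    rw [Finset.mem_range] at hk
    refine ⟨pt (2*(k/2)), ?_, ?_⟩
    · apply Finset.mem_coe.mpr
      rw [gridA]
      have hmr : k/2 ∈ Finset.range (N+1) := Finset.mem_range.mpr (by omega)
      exact Finset.mem_image_of_mem _ hmr
    · rw [dist_pt f hf hd hτ pt hpt]
      have h2 : |(k:ℝ) - (2*(k/2) : ℕ)| ≤ 1 := by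
        rw [abs_le]
        constructor <;> [skip; skip] <;>
          · have h3 : 2*(k/2) ≤ k ∧ k ≤ 2*(k/2) + 1 := ⟨by omega, by omega⟩
            have c1 : ((2*(k/2) : ℕ) : ℝ) ≤ k := by exact_mod_cast h3.1
            have c2 : (k:ℝ) ≤ (2*(k/2) : ℕ) + 1 := by exact_mod_cast h3.2
            linarith
      nlinarith

lemma grid_hausdorff_ge (hN : 1 ≤ N) :
    τ ≤ hausdorffDist (↑(gridA pt N) : Set X) (↑(gridB pt N) : Set X) := by
  have hmem : pt 1 ∈ (↑(gridB pt N) : Set X) := by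
    apply Finset.mem_coe.mpr
    rw [gridB]
    have hmr : 1 ∈ Finset.range (2*N+1) := Finset.mem_range.mpr (by omega)
    exact Finset.mem_image_of_mem _ hmr
  have hAne : (↑(gridA pt N) : Set X).Nonempty := by
    refine ⟨pt (2*0), Finset.mem_coe.mpr ?_⟩
    rw [gridA]
    have hmr : 0 ∈ Finset.range (N+1) := Finset.mem_range.mpr (by omega)
    exact Finset.mem_image_of_mem _ hmr
  have hBne : (↑(gridB pt N) : Set X).Nonempty := ⟨pt 1, hmem⟩
  have hfin : EMetric.hausdorffEdist (↑(gridB pt N) : Set X) (↑(gridA pt N) : Set X) ≠ ⊤ :=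
    hausdorffEdist_ne_top_of_nonempty_of_bounded hBne hAne
      ((gridB pt N).finite_toSet.isBounded) ((gridA pt N).finite_toSet.isBounded)
  have h1 : τ ≤ infDist (pt 1) (↑(gridA pt N) : Set X) := by
    apply le_infDist_of _ _ hAne
    intro y hy
    have hy' : y ∈ gridA pt N := Finset.mem_coe.mp hy
    rw [gridA] at hy'
    obtain ⟨k, _, rfl⟩ := Finset.mem_image.mp hy'
    rw [dist_comm, dist_pt f hf hd hτ pt hpt]
    have hcast : ((1:ℕ):ℝ) = 1 := by norm_num
    rw [hcast]
    have habs : (1:ℝ) ≤ |((2*k : ℕ) : ℝ) - 1| := by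
      rcases Nat.eq_zero_or_pos k with rfl | hk
      · norm_num
      · have hk' : (1:ℝ) ≤ (k:ℝ) := by exact_mod_cast hk
        have h2 : ((2*k : ℕ):ℝ) = 2*(k:ℝ) := by push_cast; ring
        rw [h2, abs_of_nonneg (by linarith)]
        linarith
    nlinarith
  calc τ ≤ infDist (pt 1) (↑(gridA pt N) : Set X) := h1
    _ ≤ hausdorffDist (↑(gridB pt N) : Set X) (↑(gridA pt N) : Set X) :=
        infDist_le_hausdorffDist_of_mem hmem hfin
    _ = hausdorffDist (↑(gridA pt N) : Set X) (↑(gridB pt N) : Set X) := hausdorffDist_comm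

end Grid

lemma gridA_coe_nonempty {X : Type*} [DecidableEq X] (pt : ℕ → X) (N : ℕ) :
    (↑(gridA pt N) : Set X).Nonempty := by
  refine ⟨pt (2*0), Finset.mem_coe.mpr ?_⟩
  rw [gridA]
  have hmr : 0 ∈ Finset.range (N+1) := Finset.mem_range.mpr (by omega)
  exact Finset.mem_image_of_mem _ hmr

lemma gridB_coe_nonempty {X : Type*} [DecidableEq X] (pt : ℕ → X) (N : ℕ) :
    (↑(gridB pt N) : Set X).Nonempty := by
  refine ⟨pt 0, Finset.mem_coe.mpr ?_⟩
  rw [gridB]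
  have hmr : 0 ∈ Finset.range (2*N+1) := Finset.mem_range.mpr (by omega)
  exact Finset.mem_image_of_mem _ hmr


abbrev XI := ↥(Set.Ici (0 : ℝ))

lemma hfI : StrictMono (fun a : XI => (a : ℝ)) := fun _ _ h => h

lemma hdI : ∀ a b : XI, dist a b = |(a:ℝ) - (b:ℝ)| := by
  intro a b
  rw [Subtype.dist_eq, Real.dist_eq]

lemma hfR : StrictMono (fun a : ℝ => a) := strictMono_id

lemma hdR : ∀ a b : ℝ, dist a b = |a - b| := fun a b => Real.dist_eq a b

/-- Key pair construction in the subtype space. -/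
lemma main_pair (τ ε : ℝ) (hτ : 0 < τ) :
    ∃ KA KB : NonemptyCompacts (Set.Ici (0:ℝ)),
      (KA : Set (Set.Ici (0:ℝ))).Finite ∧ (KB : Set (Set.Ici (0:ℝ))).Finite ∧
      dist KA KB ≤ τ ∧
      ε < cMag (KB : Set (Set.Ici (0:ℝ))) - cMag (KA : Set (Set.Ici (0:ℝ))) := by
  set c : ℝ := 2 * phiMag τ - phiMag (2*τ) with hc_def
  have hc : 0 < c := phiMag_gap_pos hτ
  obtain ⟨N₀, hN₀⟩ := exists_nat_gt (ε / c)
  set N : ℕ := max N₀ 1 with hN_def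
  have hN1 : 1 ≤ N := le_max_right _ _
  have hNc : ε < N * c := by
    have h1 : (N₀ : ℝ) ≤ N := by exact_mod_cast le_max_left N₀ 1
    have h2 : ε / c < (N : ℝ) := lt_of_lt_of_le hN₀ h1
    calc ε = (ε / c) * c := by field_simp
      _ < N * c := by exact mul_lt_mul_of_pos_right h2 hc
  set pt : ℕ → XI := fun k => ⟨τ * k, Set.mem_Ici.mpr (by positivity)⟩ with hpt_def
  have hpt : ∀ k, (fun a : XI => (a : ℝ)) (pt k) = τ * k := fun k => rfl
  set sA := gridA pt N
  set sB := gridB pt N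
  refine ⟨⟨⟨(↑sA : Set XI), sA.finite_toSet.isCompact⟩, gridA_coe_nonempty pt N⟩,
    ⟨⟨(↑sB : Set XI), sB.finite_toSet.isCompact⟩, gridB_coe_nonempty pt N⟩,
    sA.finite_toSet, sB.finite_toSet, ?_, ?_⟩
  · rw [NonemptyCompacts.dist_eq]
    exact grid_hausdorff_le _ hfI hdI hτ N pt hpt
  · calc ε < N * c := hNc
      _ ≤ _ := cMag_diff_ge _ hfI hdI hτ N pt hpt


/-- Magnitude is not uniformly continuous on nonempty compact (nor on
nonempty finite) subsets of `[0, ∞)`; in fact uniform continuity fails for every `ε` at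
every `δ`. -/
theorem stmt_14 :
    (¬ UniformContinuous
        (fun K : NonemptyCompacts (Set.Ici (0 : ℝ)) => cMag (K : Set (Set.Ici (0 : ℝ))))) ∧
    (¬ UniformContinuous
        (fun F : {K : NonemptyCompacts (Set.Ici (0 : ℝ)) //
            (K : Set (Set.Ici (0 : ℝ))).Finite} =>
          cMag ((F : NonemptyCompacts (Set.Ici (0 : ℝ))) : Set (Set.Ici (0 : ℝ))))) ∧
    (∀ ε > (0 : ℝ), ∀ δ > (0 : ℝ), ∃ A B : Set ℝ,
      A.Finite ∧ A.Nonempty ∧ A ⊆ Set.Ici (0 : ℝ) ∧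
      IsCompact B ∧ B.Nonempty ∧ B ⊆ Set.Ici (0 : ℝ) ∧
      hausdorffDist A B = δ ∧ cMag B - cMag A > ε) := by
  refine ⟨?_, ?_, ?_⟩
  · rw [Metric.uniformContinuous_iff]
    push_neg
    refine ⟨1, one_pos, fun δ' hδ' => ?_⟩
    obtain ⟨KA, KB, _, _, hdist, hdiff⟩ := main_pair (δ'/2) 1 (by linarith)
    refine ⟨KA, KB, lt_of_le_of_lt hdist (by linarith), ?_⟩
    rw [Real.dist_eq, abs_sub_comm]
    calc (1:ℝ) ≤ cMag (KB : Set (Set.Ici (0:ℝ))) - cMag (KA : Set (Set.Ici (0:ℝ))) :=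
          hdiff.le
      _ ≤ |cMag (KB : Set (Set.Ici (0:ℝ))) - cMag (KA : Set (Set.Ici (0:ℝ)))| :=
          le_abs_self _
  · rw [Metric.uniformContinuous_iff]
    push_neg
    refine ⟨1, one_pos, fun δ' hδ' => ?_⟩
    obtain ⟨KA, KB, hAf, hBf, hdist, hdiff⟩ := main_pair (δ'/2) 1 (by linarith)
    refine ⟨⟨KA, hAf⟩, ⟨KB, hBf⟩, ?_, ?_⟩
    · rw [Subtype.dist_eq]
      exact lt_of_le_of_lt hdist (by linarith)
    · rw [Real.dist_eq, abs_sub_comm]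
      calc (1:ℝ) ≤ cMag (KB : Set (Set.Ici (0:ℝ))) - cMag (KA : Set (Set.Ici (0:ℝ))) :=
            hdiff.le
        _ ≤ |cMag (KB : Set (Set.Ici (0:ℝ))) - cMag (KA : Set (Set.Ici (0:ℝ)))| :=
            le_abs_self _
  · intro ε hε δ hδ
    set c : ℝ := 2 * phiMag δ - phiMag (2*δ) with hc_def
    have hc : 0 < c := phiMag_gap_pos hδ
    obtain ⟨N₀, hN₀⟩ := exists_nat_gt (ε / c)
    set N : ℕ := max N₀ 1 with hN_def
    have hN1 : 1 ≤ N := le_max_right _ _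
    have hNc : ε < N * c := by
      have h1 : (N₀ : ℝ) ≤ N := by exact_mod_cast le_max_left N₀ 1
      have h2 : ε / c < (N : ℝ) := lt_of_lt_of_le hN₀ h1
      calc ε = (ε / c) * c := by field_simp
        _ < N * c := by exact mul_lt_mul_of_pos_right h2 hc
    set pt : ℕ → ℝ := fun k => δ * k with hpt_def
    have hpt : ∀ k, (fun a : ℝ => a) (pt k) = δ * k := fun k => rfl
    refine ⟨↑(gridA pt N), ↑(gridB pt N), (gridA pt N).finite_toSet,
      gridA_coe_nonempty pt N, ?_, (gridB pt N).finite_toSet.isCompact,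
      gridB_coe_nonempty pt N, ?_, ?_, ?_⟩
    · intro a ha
      have ha' : a ∈ gridA pt N := Finset.mem_coe.mp ha
      rw [gridA] at ha'
      obtain ⟨k, _, rfl⟩ := Finset.mem_image.mp ha'
      exact Set.mem_Ici.mpr (by positivity)
    · intro a ha
      have ha' : a ∈ gridB pt N := Finset.mem_coe.mp ha
      rw [gridB] at ha'
      obtain ⟨k, _, rfl⟩ := Finset.mem_image.mp ha'
      exact Set.mem_Ici.mpr (by positivity)
    · exact le_antisymm (grid_hausdorff_le _ hfR hdR hδ N pt hpt)
        (grid_hausdorff_ge _ hfR hdR hδ N pt hpt hN1)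
    · calc ε < N * c := hNc
        _ ≤ _ := cMag_diff_ge _ hfR hdR hδ N pt hpt
end

section
/- For every nonempty finite set A ⊆ ℝ and every r ≥ 0, the magnitude of the closed r-thickening of A satisfies mg({ x ∈ ℝ : dist(x, A) ≤ r }) − mg(A) ≤ r · (1 + (max A − min A)/2). -/
open Metric TopologicalSpace Filter Topology Bornology
open scoped ENNReal NNReal

open Real

lemma st18_sinh_le (x : ℝ) (hx : 0 ≤ x) : Real.sinh x ≤ x * Real.cosh x := by
  have key : MonotoneOn (fun x : ℝ => x * Real.cosh x - Real.sinh x) (Set.Ici 0) := by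
    apply monotoneOn_of_deriv_nonneg (convex_Ici 0)
    · fun_prop
    · fun_prop
    · intro y hy
      have : deriv (fun x : ℝ => x * Real.cosh x - Real.sinh x) y = y * Real.sinh y := by
        have h1 : HasDerivAt (fun x : ℝ => x * Real.cosh x - Real.sinh x)
            (1 * Real.cosh y + y * Real.sinh y - Real.cosh y) y := by
          exact ((hasDerivAt_id y).mul (Real.hasDerivAt_cosh y)).sub (Real.hasDerivAt_sinh y)
        rw [h1.deriv]; ring
      rw [this]
      have hy' : 0 ≤ y := le_of_lt (by simpa using hy)
      exact mul_nonneg hy' (Real.sinh_nonneg_iff.2 hy')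
  have h0 : (0:ℝ) ∈ Set.Ici (0:ℝ) := Set.mem_Ici.2 le_rfl
  have := key h0 (Set.mem_Ici.2 hx) hx
  simp at this
  linarith

lemma st18_tanh_nonneg (x : ℝ) (hx : 0 ≤ x) : 0 ≤ Real.tanh x := by
  rw [Real.tanh_eq_sinh_div_cosh]
  exact div_nonneg (Real.sinh_nonneg_iff.2 hx) (Real.cosh_pos x).le

lemma st18_tanh_le_self (x : ℝ) (hx : 0 ≤ x) : Real.tanh x ≤ x := by
  rw [Real.tanh_eq_sinh_div_cosh, div_le_iff₀ (Real.cosh_pos x)]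
  exact st18_sinh_le x hx

lemma st18_tanh_lt_one (x : ℝ) : Real.tanh x < 1 := by
  rw [Real.tanh_eq_sinh_div_cosh, div_lt_one (Real.cosh_pos x)]
  nlinarith [Real.cosh_sub_sinh x, Real.exp_pos (-x)]

lemma st18_tanh_half (d : ℝ) :
    Real.tanh (d/2) = (1 - Real.exp (-d)) / (1 + Real.exp (-d)) := by
  rw [Real.tanh_eq_sinh_div_cosh, Real.sinh_eq, Real.cosh_eq]
  have h1 : Real.exp (-(d/2)) > 0 := Real.exp_pos _
  have h2 : Real.exp (-d) = Real.exp (-(d/2)) * Real.exp (-(d/2)) := by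
    rw [← Real.exp_add]; ring_nf
  have h3 : Real.exp (d/2) * Real.exp (-(d/2)) = 1 := by
    rw [← Real.exp_add]; simp
  have h4 : 0 < 1 + Real.exp (-d) := by positivity
  have h5 : 0 < Real.exp (d/2) + Real.exp (-(d/2)) := by positivity
  have hnd : -d/2 = -(d/2) := by ring
  field_simp
  rw [h2]
  nlinarith [Real.exp_pos (d/2)]

-- step lemma
lemma st18_step (s t r : ℝ) (hs : 0 ≤ s) (ht : 0 ≤ t) (hr : 0 ≤ r) (hts : t - s ≤ r) :
    Real.tanh s ≤ Real.tanh t + r * t + (s - t) := by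
  have hcs := Real.cosh_pos s
  have hct := Real.cosh_pos t
  have hdiff : Real.tanh s - Real.tanh t = Real.sinh (s - t) / (Real.cosh s * Real.cosh t) := by
    rw [Real.tanh_eq_sinh_div_cosh, Real.tanh_eq_sinh_div_cosh, Real.sinh_sub]
    field_simp
  rcases le_or_gt t s with h | h
  · -- tanh s - tanh t ≤ s - t
    have h1 : Real.sinh (s - t) ≤ (s - t) * Real.cosh (s - t) := st18_sinh_le _ (by linarith)
    have h2 : Real.cosh (s - t) ≤ Real.cosh s * Real.cosh t := by
      rw [Real.cosh_sub] at *
      nlinarith [Real.sinh_nonneg_iff.2 hs, Real.sinh_nonneg_iff.2 ht]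
    have h3 : Real.tanh s - Real.tanh t ≤ s - t := by
      rw [hdiff, div_le_iff₀ (by positivity)]
      nlinarith [Real.one_le_cosh (s-t)]
    nlinarith [mul_nonneg hr ht]
  · -- s < t
    have hst : s - t < 0 := by linarith
    have h1 : (t - s) ≤ Real.sinh (t - s) := Real.self_le_sinh_iff.2 (by linarith)
    have hsc : Real.cosh s ≤ Real.cosh t := Real.cosh_le_cosh.2 (by
      rw [abs_of_nonneg hs, abs_of_nonneg ht]; linarith)
    have htanht : Real.tanh t ≤ 1 := (st18_tanh_lt_one t).le
    have htt : Real.tanh t ≤ t := st18_tanh_le_self t ht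
    have htn : 0 ≤ Real.tanh t := st18_tanh_nonneg t ht
    -- want: tanh t - tanh s ≥ (t - s) - r * t
    have key : (t - s) * (1 - 1/(Real.cosh s * Real.cosh t)) ≤ r * t := by
      have e1 : 1 - 1/(Real.cosh s * Real.cosh t) ≤ 1 - 1/(Real.cosh t * Real.cosh t) := by
        have : Real.cosh s * Real.cosh t ≤ Real.cosh t * Real.cosh t := by nlinarith
        have h0 : (0:ℝ) < Real.cosh s * Real.cosh t := by positivity
        have h0' : (0:ℝ) < Real.cosh t * Real.cosh t := by positivity
        have := one_div_le_one_div_of_le h0 this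
        linarith
      have e2 : 1 - 1/(Real.cosh t * Real.cosh t) = Real.tanh t * Real.tanh t := by
        rw [Real.tanh_eq_sinh_div_cosh]
        field_simp
        nlinarith [Real.cosh_sq t]
      have e3 : Real.tanh t * Real.tanh t ≤ t := by nlinarith
      have hone : 1 ≤ Real.cosh s * Real.cosh t := by
        nlinarith [Real.one_le_cosh s, Real.one_le_cosh t]
      have e4 : 0 ≤ 1 - 1/(Real.cosh s * Real.cosh t) := by
        have : 1/(Real.cosh s * Real.cosh t) ≤ 1 := by
          rw [div_le_one (by positivity)]; exact hone
        linarith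
      have e4' : 0 ≤ 1 - 1/(Real.cosh t * Real.cosh t) := by
        rw [e2]; exact mul_self_nonneg _
      calc (t - s) * (1 - 1/(Real.cosh s * Real.cosh t))
          ≤ (t - s) * (Real.tanh t * Real.tanh t) := by
            rw [← e2]; exact mul_le_mul_of_nonneg_left e1 (by linarith)
        _ ≤ r * (Real.tanh t * Real.tanh t) := by
            apply mul_le_mul_of_nonneg_right (by linarith) (mul_self_nonneg _)
        _ ≤ r * t := mul_le_mul_of_nonneg_left e3 hr
    have hP : (0:ℝ) < Real.cosh s * Real.cosh t := by positivity
    have hq : (t - s) / (Real.cosh s * Real.cosh t)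
        ≤ Real.sinh (t - s) / (Real.cosh s * Real.cosh t) := by gcongr
    have hexp : (t-s) * (1 - 1/(Real.cosh s * Real.cosh t))
        = (t-s) - (t-s)/(Real.cosh s * Real.cosh t) := by field_simp
    have hsinh' : Real.sinh (s - t)/(Real.cosh s*Real.cosh t)
        = -(Real.sinh (t-s)/(Real.cosh s*Real.cosh t)) := by
      rw [show s - t = -(t-s) by ring, Real.sinh_neg]; ring
    linarith [hdiff, hq, key, hexp, hsinh']


noncomputable def st18_G : List ℝ → ℝ
  | [] => 0
  | [_] => 0
  | a :: b :: t => Real.tanh ((b - a)/2) + st18_G (b :: t)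

def st18_last : ℝ → List ℝ → ℝ
  | a, [] => a
  | _, b :: t => st18_last b t

noncomputable def st18_sq : List ℝ → List ℝ
  | [] => []
  | [a] => [a]
  | a :: b :: t => if a = b then st18_sq (b :: t) else a :: st18_sq (b :: t)

lemma st18_last_mem : ∀ (t : List ℝ) (a : ℝ), st18_last a t ∈ a :: t := by
  intro t
  induction t with
  | nil => intro a; simp [st18_last]
  | cons b t ih =>
    intro a
    have := ih b
    simp only [st18_last]
    rcases List.mem_cons.1 this with h | h
    · simp [h]
    · simp [h]

lemma st18_G_nonneg : ∀ (l : List ℝ), l.Pairwise (· ≤ ·) → 0 ≤ st18_G l := by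
  intro l
  induction l with
  | nil => intro _; simp [st18_G]
  | cons a l ih =>
    intro hs
    cases l with
    | nil => simp [st18_G]
    | cons b t =>
      have h1 := (List.pairwise_cons.1 hs).1 b (by simp)
      have h2 := ih (List.pairwise_cons.1 hs).2
      have : 0 ≤ Real.tanh ((b - a)/2) := by
        rw [Real.tanh_eq_sinh_div_cosh]
        exact div_nonneg (Real.sinh_nonneg_iff.2 (by linarith)) (Real.cosh_pos _).le
      simp only [st18_G]
      linarith

lemma st18_G_le : ∀ (t : List ℝ) (a : ℝ), (a :: t).Pairwise (· ≤ ·) →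
    st18_G (a :: t) ≤ (st18_last a t - a)/2 := by
  intro t
  induction t with
  | nil => intro a _; simp [st18_G, st18_last]
  | cons b t ih =>
    intro a hs
    have hab := (List.pairwise_cons.1 hs).1 b (by simp)
    have h2 := ih b (List.pairwise_cons.1 hs).2
    have htanh : Real.tanh ((b - a)/2) ≤ (b - a)/2 := by
      rw [Real.tanh_eq_sinh_div_cosh, div_le_iff₀ (Real.cosh_pos _)]
      exact st18_sinh_le _ (by linarith)
    simp only [st18_G, st18_last] at *
    linarith

lemma st18_sq_cons : ∀ (l : List ℝ) (a : ℝ), ∃ t', st18_sq (a :: l) = a :: t' := by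
  intro l
  induction l with
  | nil => intro a; exact ⟨[], rfl⟩
  | cons b t ih =>
    intro a
    by_cases h : a = b
    · obtain ⟨t', ht'⟩ := ih b
      exact ⟨t', by simp [st18_sq, h, ht']⟩
    · exact ⟨st18_sq (b :: t), by simp [st18_sq, h]⟩

lemma st18_sq_subset : ∀ (l : List ℝ), ∀ x ∈ st18_sq l, x ∈ l := by
  intro l
  induction l with
  | nil => simp [st18_sq]
  | cons a l ih =>
    cases l with
    | nil => simp [st18_sq]
    | cons b t =>
      intro x hx
      by_cases h : a = b
      · simp only [st18_sq, if_pos h] at hx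
        exact List.mem_cons_of_mem a (ih x hx)
      · simp only [st18_sq, if_neg h] at hx
        rcases List.mem_cons.1 hx with h1 | h1
        · simp [h1]
        · exact List.mem_cons_of_mem a (ih x h1)

lemma st18_sq_toFinset : ∀ (l : List ℝ), (st18_sq l).toFinset = l.toFinset := by
  intro l
  induction l with
  | nil => simp [st18_sq]
  | cons a l ih =>
    cases l with
    | nil => simp [st18_sq]
    | cons b t =>
      by_cases h : a = b
      · simp only [st18_sq, if_pos h, ih]
        simp [h]
      · simp only [st18_sq, if_neg h]
        simp [ih]

lemma st18_sq_sorted : ∀ (l : List ℝ), l.Pairwise (· ≤ ·) → (st18_sq l).Pairwise (· < ·) := by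
  intro l
  induction l with
  | nil => intro _; simp [st18_sq]
  | cons a l ih =>
    cases l with
    | nil => intro _; simp [st18_sq]
    | cons b t =>
      intro hs
      have hs' := (List.pairwise_cons.1 hs).2
      have hab : a ≤ b := (List.pairwise_cons.1 hs).1 b (by simp)
      by_cases h : a = b
      · simpa only [st18_sq, if_pos h] using ih hs'
      · simp only [st18_sq, if_neg h]
        rw [List.pairwise_cons]
        refine ⟨?_, ih hs'⟩
        intro x hx
        have hxm := st18_sq_subset _ x hx
        rcases List.mem_cons.1 hxm with h1 | h1
        · subst h1; exact lt_of_le_of_ne hab h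
        · have := (List.pairwise_cons.1 hs').1 x h1
          have hab' : a < b := lt_of_le_of_ne hab h
          linarith

lemma st18_G_sq : ∀ (l : List ℝ), l.Pairwise (· ≤ ·) → st18_G l = st18_G (st18_sq l) := by
  intro l
  induction l with
  | nil => intro _; simp [st18_sq]
  | cons a l ih =>
    cases l with
    | nil => intro _; simp [st18_sq]
    | cons b t =>
      intro hs
      have hs' := (List.pairwise_cons.1 hs).2
      by_cases h : a = b
      · subst h
        have e : st18_sq (a :: a :: t) = st18_sq (a :: t) := by simp [st18_sq]
        rw [e, ← ih hs']
        simp [st18_G]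
      · obtain ⟨t', ht'⟩ := st18_sq_cons t b
        have e : st18_sq (a :: b :: t) = a :: st18_sq (b :: t) := by simp [st18_sq, h]
        have hG : st18_G (b :: t) = st18_G (b :: t') := by rw [ih hs', ht']
        rw [e, ht']
        simp only [st18_G]
        rw [hG]

lemma st18_tel (p : ℝ → ℝ) (S : Set ℝ) (r : ℝ) (hr : 0 ≤ r)
    (hlo : ∀ y ∈ S, y - r ≤ p y) (hhi : ∀ y ∈ S, p y ≤ y + r)
    (hmono : ∀ y ∈ S, ∀ z ∈ S, y ≤ z → p y ≤ p z) :
    ∀ (t : List ℝ) (a : ℝ), (a :: t).Pairwise (· < ·) → (∀ z ∈ a :: t, z ∈ S) →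
      st18_G (a :: t) ≤ st18_G ((a :: t).map p)
        + r * (p (st18_last a t) - p a)/2
        + ((st18_last a t - p (st18_last a t)) - (a - p a))/2 := by
  intro t
  induction t with
  | nil => intro a _ _; simp [st18_G, st18_last]
  | cons b t ih =>
    intro a hsort hmem
    have haS : a ∈ S := hmem a (by simp)
    have hbS : b ∈ S := hmem b (by simp)
    have hab : a < b := (List.pairwise_cons.1 hsort).1 b (by simp)
    have hIH := ih b (List.pairwise_cons.1 hsort).2
      (fun z hz => hmem z (List.mem_cons_of_mem a hz))
    have hstep : Real.tanh ((b - a)/2) ≤ Real.tanh ((p b - p a)/2)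
        + r * ((p b - p a)/2) + ((b - a)/2 - (p b - p a)/2) := by
      apply st18_step _ _ r (by linarith) ?_ hr ?_
      · have := hmono a haS b hbS hab.le; linarith
      · have h1 := hhi b hbS
        have h2 := hlo a haS
        linarith
    have hmapG : st18_G ((a :: b :: t).map p)
        = Real.tanh ((p b - p a)/2) + st18_G ((b :: t).map p) := by
      simp only [List.map_cons, st18_G]
    have hlast : st18_last a (b :: t) = st18_last b t := rfl
    simp only [st18_G, hlast, hmapG]
    simp only [List.map_cons] at hIH ⊢
    linarith



noncomputable def st18_T : (n : ℕ) → (Fin (n+1) → ℝ) → ℝ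
  | 0, _ => 0
  | (n+1), x => Real.tanh ((x 1 - x 0)/2) + st18_T n (x ∘ Fin.succ)

noncomputable def st18_Kx {n : ℕ} (x : Fin n → ℝ) : Matrix (Fin n) (Fin n) ℝ :=
  Matrix.of fun i j => Real.exp (-|x i - x j|)

lemma st18_core : ∀ (n : ℕ) (x : Fin (n+1) → ℝ), StrictMono x →
    ∃ w : Fin (n+1) → ℝ,
      (st18_Kx x).mulVec w = (fun _ => 1) ∧ (∀ z, (st18_Kx x).mulVec z = 0 → z = 0) ∧
      ∑ i, w i = 1 + st18_T n x := by
  intro n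
  induction n with
  | zero =>
    intro x _
    refine ⟨fun _ => 1, ?_, ?_, ?_⟩
    · funext i
      refine Fin.cases ?_ (fun j => j.elim0) i
      simp [Matrix.mulVec, dotProduct, st18_Kx, Fin.sum_univ_one]
    · intro z hz
      funext i
      have h0 := congrFun hz 0
      simp [Matrix.mulVec, dotProduct, st18_Kx, Fin.sum_univ_one] at h0
      refine Fin.cases ?_ (fun j => j.elim0) i
      simpa using h0
    · simp [st18_T, Fin.sum_univ_one]
  | succ n ih =>
    intro x hx
    set y : Fin (n+1) → ℝ := x ∘ Fin.succ with hy
    have hy_mono : StrictMono y := hx.comp Fin.strictMono_succ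
    obtain ⟨w, hw, hinj, hsum⟩ := ih y hy_mono
    have hab : x 0 < x 1 := hx (by simp [Fin.lt_def])
    set u := Real.exp (x 0 - x 1) with hu
    have hu0 : 0 < u := Real.exp_pos _
    have hu1 : u < 1 := by rw [hu, Real.exp_lt_one_iff]; linarith
    have h1u : (0:ℝ) < 1 + u := by linarith
    set β : ℝ := 1 / (1 + u) with hβ
    set α : ℝ := -(u * β) with hα
    have hx0 : ∀ j : Fin (n+1), x 0 < x j.succ := fun j => hx (Fin.succ_pos j)
    have hy0 : ∀ j : Fin (n+1), y 0 ≤ y j := fun j => hy_mono.monotone (Fin.zero_le j)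
    have hy0x : y 0 = x 1 := by simp [hy, Fin.succ_zero_eq_one]
    -- entry lemmas
    have e00 : st18_Kx x 0 0 = 1 := by simp [st18_Kx]
    have el00 : st18_Kx y 0 0 = 1 := by simp [st18_Kx]
    have esucc : ∀ i j : Fin (n+1), st18_Kx x i.succ j.succ = st18_Kx y i j := by
      intro i j; simp [st18_Kx, hy]
    have e0succ : ∀ j : Fin (n+1), st18_Kx x 0 j.succ = u * st18_Kx y 0 j := by
      intro j
      have h1 : x 0 - x j.succ ≤ 0 := by have := hx0 j; linarith
      have h2 : y 0 - y j ≤ 0 := by have := hy0 j; linarith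
      simp only [st18_Kx, Matrix.of_apply]
      rw [show -|x 0 - x j.succ| = (x 0 - x 1) + -|y 0 - y j| from by
        rw [abs_of_nonpos h1, abs_of_nonpos h2, hy0x]; simp [hy], Real.exp_add]
    have sym : ∀ {m : ℕ} (v : Fin m → ℝ) (i j : Fin m), st18_Kx v i j = st18_Kx v j i := by
      intro m v i j; simp [st18_Kx, abs_sub_comm]
    have esucc0 : ∀ i : Fin (n+1), st18_Kx x i.succ 0 = u * st18_Kx y i 0 := by
      intro i; rw [sym x i.succ 0, e0succ i, sym y 0 i]
    have hwrow : ∀ i, ∑ j, st18_Kx y i j * w j = 1 := by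
      intro i
      have := congrFun hw i
      simpa [Matrix.mulVec, dotProduct] using this
    set w' : Fin (n+2) → ℝ := Fin.cons β (fun i => w i + if i = 0 then α else 0) with hw'
    have hw'0 : w' 0 = β := rfl
    have hw's : ∀ j : Fin (n+1), w' j.succ = w j + if j = 0 then α else 0 := fun j => rfl
    refine ⟨w', ?_, ?_, ?_⟩
    · funext i
      simp only [Matrix.mulVec, dotProduct]
      refine Fin.cases ?_ ?_ i
      · rw [Fin.sum_univ_succ, hw'0, e00]
        have hterm : ∀ j : Fin (n+1),
            st18_Kx x 0 j.succ * w' j.succ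
            = u * (st18_Kx y 0 j * w j)
              + u * (if j = 0 then st18_Kx y 0 j * α else 0) := by
          intro j
          rw [e0succ j, hw's j]
          by_cases h : j = 0 <;> simp [h] <;> ring
        rw [Finset.sum_congr rfl (fun j _ => hterm j), Finset.sum_add_distrib,
          ← Finset.mul_sum, ← Finset.mul_sum, hwrow 0,
          Finset.sum_ite_eq' Finset.univ 0 (fun j => st18_Kx y 0 j * α)]
        simp only [Finset.mem_univ, if_true, el00, hα, hβ]
        field_simp
        ring
      · intro i
        rw [Fin.sum_univ_succ, hw'0, esucc0 i]
        have hterm : ∀ j : Fin (n+1),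
            st18_Kx x i.succ j.succ * w' j.succ
            = st18_Kx y i j * w j
              + (if j = 0 then st18_Kx y i j * α else 0) := by
          intro j
          rw [esucc i j, hw's j]
          by_cases h : j = 0 <;> simp [h] <;> ring
        rw [Finset.sum_congr rfl (fun j _ => hterm j), Finset.sum_add_distrib, hwrow i,
          Finset.sum_ite_eq' Finset.univ 0 (fun j => st18_Kx y i j * α)]
        simp only [Finset.mem_univ, if_true, hα]
        ring
    · intro z hz
      have hrow : ∀ i, ∑ j, st18_Kx x i j * z j = 0 := by
        intro i
        have := congrFun hz i
        simpa [Matrix.mulVec, dotProduct] using this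
      set zt : Fin (n+1) → ℝ :=
        fun j => z j.succ + (u * z 0) * (if j = 0 then 1 else 0) with hzt
      have h1 : (st18_Kx y).mulVec zt = 0 := by
        funext i
        have hri := hrow i.succ
        rw [Fin.sum_univ_succ] at hri
        rw [esucc0 i] at hri
        have hterm : ∀ j : Fin (n+1),
            st18_Kx x i.succ j.succ * z j.succ = st18_Kx y i j * z j.succ := by
          intro j; rw [esucc i j]
        rw [Finset.sum_congr rfl (fun j _ => hterm j)] at hri
        simp only [Matrix.mulVec, dotProduct, hzt, Pi.zero_apply]
        have : ∀ j : Fin (n+1),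
            st18_Kx y i j * (z j.succ + u * z 0 * (if j = 0 then 1 else 0))
            = st18_Kx y i j * z j.succ
              + (if j = 0 then st18_Kx y i j * (u * z 0) else 0) := by
          intro j; by_cases h : j = 0 <;> simp [h] <;> ring
        rw [Finset.sum_congr rfl (fun j _ => this j), Finset.sum_add_distrib,
          Finset.sum_ite_eq' Finset.univ 0 (fun j => st18_Kx y i j * (u * z 0))]
        simp only [Finset.mem_univ, if_true]
        linear_combination hri
      have h2 : zt = 0 := hinj zt h1
      have hzsucc : ∀ j : Fin (n+1), z j.succ = -(u * z 0) * (if j = 0 then 1 else 0) := by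
        intro j
        have := congrFun h2 j
        simp only [hzt, Pi.zero_apply] at this
        linarith [this]
      have hr0 := hrow 0
      rw [Fin.sum_univ_succ, e00] at hr0
      have hterm : ∀ j : Fin (n+1),
          st18_Kx x 0 j.succ * z j.succ
          = if j = 0 then -(u * u * z 0) * st18_Kx y 0 j else 0 := by
        intro j
        rw [e0succ j, hzsucc j]
        by_cases h : j = 0 <;> simp [h] <;> ring
      rw [Finset.sum_congr rfl (fun j _ => hterm j),
        Finset.sum_ite_eq' Finset.univ 0 (fun j => -(u * u * z 0) * st18_Kx y 0 j)] at hr0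
      simp only [Finset.mem_univ, if_true, el00, one_mul, mul_one] at hr0
      have hfac : z 0 * (1 - u * u) = 0 := by linear_combination hr0
      have hne : (1 : ℝ) - u * u ≠ 0 := by nlinarith
      have hz0 : z 0 = 0 := (mul_eq_zero.1 hfac).resolve_right hne
      funext i
      refine Fin.cases ?_ ?_ i
      · exact hz0
      · intro i
        rw [hzsucc i, hz0]
        simp
    · rw [Fin.sum_univ_succ, hw'0]
      simp only [hw's]
      rw [Finset.sum_add_distrib, Finset.sum_ite_eq' Finset.univ 0 (fun _ => α)]
      simp only [Finset.mem_univ, if_true]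
      rw [hsum]
      have htanh : Real.tanh ((x 1 - x 0)/2) = β + α := by
        have h2 := st18_tanh_half (x 1 - x 0)
        rw [show -(x 1 - x 0) = x 0 - x 1 from by ring] at h2
        have h3 : β + α = (1 - u)/(1 + u) := by
          have hne : (1:ℝ) + u ≠ 0 := ne_of_gt h1u
          simp only [hα, hβ]; field_simp; ring
        rw [h2, h3, hu]
      show β + (1 + st18_T n y + α) = 1 + st18_T (n+1) x
      simp only [st18_T]
      rw [htanh, ← hy]
      ring

lemma st18_T_eq_G : ∀ (n : ℕ) (l : List ℝ) (hc : l.length = n + 1) (x : Fin (n+1) → ℝ),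
    (∀ i : Fin (n+1), x i = l.get (Fin.cast hc.symm i)) → st18_T n x = st18_G l := by
  intro n
  induction n with
  | zero =>
    intro l hc x hx
    match l, hc with
    | [a], _ => simp [st18_T, st18_G]
  | succ n ih =>
    intro l hc x hx
    match l, hc with
    | a :: b :: t, hc =>
      have hc' : (b :: t).length = n + 1 := by simpa using hc
      have hx' : ∀ i : Fin (n+1), (x ∘ Fin.succ) i = (b :: t).get (Fin.cast hc'.symm i) := by
        intro i
        rw [Function.comp_apply, hx i.succ]
        rfl
      have h0 : x 0 = a := by rw [hx 0]; rfl
      have h1 : x 1 = b := by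
        rw [hx 1]
        have hv : (Fin.cast hc.symm (1 : Fin (n+2))) = ⟨1, by rw [hc]; omega⟩ := by
          apply Fin.ext; simp only [Fin.coe_cast, Fin.val_one]
        rw [hv]
        rfl
      show Real.tanh ((x 1 - x 0)/2) + st18_T n (x ∘ Fin.succ) = st18_G (a :: b :: t)
      rw [h0, h1, ih (b :: t) hc' _ hx']
      simp [st18_G]

lemma st18_finMag (s : Finset ℝ) (hs : s.Nonempty) :
    finMag s = 1 + st18_G (s.sort (· ≤ ·)) := by
  obtain ⟨n, hn⟩ : ∃ n, s.card = n + 1 := ⟨s.card - 1, by have := Finset.card_pos.2 hs; omega⟩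
  set l := s.sort (· ≤ ·) with hl
  have hlen : l.length = n + 1 := by rw [hl, Finset.length_sort]; exact hn
  have hsort : l.Pairwise (· < ·) := (Finset.sortedLT_sort s).pairwise
  set x : Fin (n+1) → ℝ := fun i => l.get (Fin.cast hlen.symm i) with hxdef
  have hxmono : StrictMono x := by
    intro i j hij
    apply hsort.rel_get_of_lt
    rw [Fin.lt_def]
    simp only [Fin.coe_cast]
    exact hij
  obtain ⟨w, hw, hinj, hsum⟩ := st18_core n x hxmono
  have hdet : (st18_Kx x).det ≠ 0 := by
    intro h
    obtain ⟨v, hv0, hv⟩ := (Matrix.exists_mulVec_eq_zero_iff).2 h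
    exact hv0 (hinj v hv)
  have hmem : ∀ i : Fin (n+1), x i ∈ s := by
    intro i
    rw [hxdef]
    refine (Finset.mem_sort (α := ℝ) (· ≤ ·)).1 ?_
    exact List.get_mem _ _
  set f : Fin (n+1) → {y // y ∈ s} := fun i => ⟨x i, hmem i⟩ with hf
  have hfinj : Function.Injective f := by
    intro i j hij
    exact hxmono.injective (congrArg Subtype.val hij)
  have hbij : Function.Bijective f := by
    rw [Fintype.bijective_iff_injective_and_card]
    exact ⟨hfinj, by simp [Fintype.card_coe, hn]⟩
  set e := Equiv.ofBijective f hbij with he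
  have hev : ∀ i : Fin (n+1), ((e i : ℝ)) = x i := fun i => rfl
  have hsymv : ∀ i : {y // y ∈ s}, x (e.symm i) = (i : ℝ) := by
    intro i
    have h1 : e (e.symm i) = i := e.apply_symm_apply i
    have h2 := congrArg Subtype.val h1
    rw [← hev (e.symm i)]
    exact h2
  have hsim : simMatrix s = (st18_Kx x).submatrix e.symm e.symm := by
    funext i j
    simp only [simMatrix, st18_Kx, Matrix.submatrix_apply, Matrix.of_apply]
    rw [Real.dist_eq, hsymv i, hsymv j]
  have hiu : IsUnit (st18_Kx x).det := isUnit_iff_ne_zero.2 hdet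
  have hKw : (st18_Kx x)⁻¹.mulVec (fun _ => 1) = w := by
    calc (st18_Kx x)⁻¹.mulVec (fun _ => 1)
        = (st18_Kx x)⁻¹.mulVec ((st18_Kx x).mulVec w) := by rw [hw]
      _ = ((st18_Kx x)⁻¹ * (st18_Kx x)).mulVec w := by rw [Matrix.mulVec_mulVec]
      _ = w := by rw [Matrix.nonsing_inv_mul _ hiu, Matrix.one_mulVec]
  have hsum2 : ∑ a, ∑ b, (st18_Kx x)⁻¹ a b = 1 + st18_G l := by
    have h1 : ∀ a, ∑ b, (st18_Kx x)⁻¹ a b = ((st18_Kx x)⁻¹.mulVec (fun _ => 1)) a := by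
      intro a; simp [Matrix.mulVec, dotProduct]
    rw [Finset.sum_congr rfl (fun a _ => h1 a), hKw, hsum,
      st18_T_eq_G n l hlen x (fun i => rfl)]
  show (∑ i, ∑ j, (simMatrix s)⁻¹ i j) = 1 + st18_G l
  rw [hsim, Matrix.inv_submatrix_equiv]
  have hinner : ∀ i : {y // y ∈ s},
      ∑ j : {y // y ∈ s}, ((st18_Kx x)⁻¹.submatrix e.symm e.symm) i j
      = ∑ b, (st18_Kx x)⁻¹ (e.symm i) b := by
    intro i
    simp only [Matrix.submatrix_apply]
    exact Equiv.sum_comp e.symm (fun b => (st18_Kx x)⁻¹ (e.symm i) b)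
  rw [Finset.sum_congr rfl (fun i _ => hinner i)]
  rw [Equiv.sum_comp e.symm (fun a => ∑ b, (st18_Kx x)⁻¹ a b)]
  exact hsum2

/-- For a nonempty finite `A ⊆ ℝ` and `r ≥ 0`, the magnitude of the closed
`r`-thickening of `A` exceeds that of `A` by at most `r · (1 + (max A − min A)/2)`. -/
theorem stmt_18 (A : Finset ℝ) (hA : A.Nonempty) (r : ℝ) (hr : 0 ≤ r) :
    cMag {x : ℝ | infDist x (A : Set ℝ) ≤ r} - cMag (A : Set ℝ) ≤
      r * (1 + (A.max' hA - A.min' hA) / 2) := by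
  classical
  set T : Set ℝ := {x : ℝ | infDist x (A : Set ℝ) ≤ r} with hT
  set R := r * (1 + (A.max' hA - A.min' hA) / 2) with hR
  have hminmax : A.min' hA ≤ A.max' hA := Finset.min'_le A _ (A.max'_mem hA)
  have hR0 : 0 ≤ R := by rw [hR]; apply mul_nonneg hr; linarith
  have hmag0 : finMag (∅ : Finset ℝ) = 0 := by
    simp [finMag]
  -- upper bound for finite subsets of A
  have hCb : ∀ s : Finset ℝ, (s : Set ℝ) ⊆ (A : Set ℝ) →
      finMag s ≤ 1 + (A.max' hA - A.min' hA)/2 := by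
    intro s hsA
    rcases s.eq_empty_or_nonempty with rfl | hsne
    · rw [hmag0]; linarith
    · obtain ⟨a, t, hat⟩ : ∃ a t, s.sort (· ≤ ·) = a :: t := by
        cases h : s.sort (· ≤ ·) with
        | nil =>
          exfalso
          have h1 := Finset.length_sort (α := ℝ) (· ≤ ·) (s := s)
          rw [h] at h1
          have h2 := Finset.card_pos.2 hsne
          simp at h1; omega
        | cons a t => exact ⟨a, t, rfl⟩
      have hsorted : (a :: t).Pairwise (· ≤ ·) := hat ▸ Finset.pairwise_sort _ _
      have hGle := st18_G_le t a hsorted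
      have hmemS : ∀ z ∈ a :: t, z ∈ A := by
        intro z hz
        have hzs : z ∈ s := by
          rw [← Finset.mem_sort (α := ℝ) (· ≤ ·), hat]; exact hz
        exact_mod_cast hsA (by exact_mod_cast hzs)
      have hlA : st18_last a t ∈ A := hmemS _ (st18_last_mem t a)
      have haA : a ∈ A := hmemS a (by simp)
      have h1 : st18_last a t ≤ A.max' hA := Finset.le_max' A _ hlA
      have h2 : A.min' hA ≤ a := Finset.min'_le A _ haA
      rw [st18_finMag s hsne, hat]
      linarith
  have hAfin : cMagE (A : Set ℝ) ≠ ⊤ := by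
    have hb : cMagE (A : Set ℝ) ≤ ENNReal.ofReal (1 + (A.max' hA - A.min' hA)/2) := by
      simp only [cMagE]
      exact iSup_le fun s => iSup_le fun hs => ENNReal.ofReal_le_ofReal (hCb s hs)
    exact ne_top_of_le_ne_top ENNReal.ofReal_ne_top hb
  -- the projection map p
  set p : ℝ → ℝ := fun y =>
    if h : (A.filter (fun x => x ≤ y + r)).Nonempty
    then (A.filter (fun x => x ≤ y + r)).max' h else 0 with hp
  have hthick : ∀ y ∈ T, ∃ a ∈ A, |y - a| ≤ r := by
    intro y hy
    obtain ⟨a, haA, hd⟩ := (A.finite_toSet.isCompact).exists_infDist_eq_dist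
      (Finset.coe_nonempty.2 hA) y
    refine ⟨a, by exact_mod_cast haA, ?_⟩
    rw [← Real.dist_eq, ← hd]
    exact hy
  have hpfilter : ∀ y ∈ T, (A.filter (fun x => x ≤ y + r)).Nonempty := by
    intro y hy
    obtain ⟨a, ha, hab⟩ := hthick y hy
    have := (abs_le.1 hab).1
    exact ⟨a, Finset.mem_filter.2 ⟨ha, by linarith⟩⟩
  have hpA : ∀ y ∈ T, p y ∈ A ∧ p y ≤ y + r ∧ y - r ≤ p y := by
    intro y hy
    have hf := hpfilter y hy
    have hpy : p y = (A.filter (fun x => x ≤ y + r)).max' hf := by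
      rw [hp]; simp only [dif_pos hf]
    have hmax := Finset.max'_mem _ hf
    rw [Finset.mem_filter] at hmax
    refine ⟨hpy ▸ hmax.1, hpy ▸ hmax.2, ?_⟩
    obtain ⟨a, ha, hab⟩ := hthick y hy
    have h1 := (abs_le.1 hab).1
    have h2 := (abs_le.1 hab).2
    have haf : a ∈ A.filter (fun x => x ≤ y + r) :=
      Finset.mem_filter.2 ⟨ha, by linarith⟩
    have h3 := Finset.le_max' _ a haf
    rw [hpy]
    linarith
  have hpmono : ∀ y ∈ T, ∀ z ∈ T, y ≤ z → p y ≤ p z := by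
    intro y hy z hz hyz
    have hfy := hpfilter y hy
    have hfz := hpfilter z hz
    rw [hp]
    simp only [dif_pos hfy, dif_pos hfz]
    apply Finset.max'_subset
    intro a haf
    rw [Finset.mem_filter] at haf ⊢
    exact ⟨haf.1, by linarith [haf.2]⟩
  -- key bound for finite subsets of T
  have hkey : ∀ F : Finset ℝ, (F : Set ℝ) ⊆ T → finMag F ≤ cMag (A : Set ℝ) + R := by
    intro F hF
    rcases F.eq_empty_or_nonempty with rfl | hFne
    · rw [hmag0]
      have := ENNReal.toReal_nonneg (a := cMagE (A : Set ℝ))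
      rw [cMag] at *
      linarith
    · obtain ⟨a, t, hat⟩ : ∃ a t, F.sort (· ≤ ·) = a :: t := by
        cases h : F.sort (· ≤ ·) with
        | nil =>
          exfalso
          have h1 := Finset.length_sort (α := ℝ) (· ≤ ·) (s := F)
          rw [h] at h1
          have h2 := Finset.card_pos.2 hFne
          simp at h1; omega
        | cons a t => exact ⟨a, t, rfl⟩
      have hsortF : (a :: t).Pairwise (· < ·) := hat ▸ (Finset.sortedLT_sort F).pairwise
      have hmemT : ∀ z ∈ a :: t, z ∈ T := by
        intro z hz
        apply hF
        have hzF : z ∈ F := by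
          rw [← Finset.mem_sort (α := ℝ) (· ≤ ·), hat]; exact hz
        exact_mod_cast hzF
      have htel := st18_tel p T r hr (fun y hy => (hpA y hy).2.2)
        (fun y hy => (hpA y hy).2.1) hpmono t a hsortF hmemT
      have hFmag : finMag F = 1 + st18_G (a :: t) := by
        rw [st18_finMag F hFne, hat]
      set ws := (a :: t).map p with hws
      have hwss : ws.Pairwise (· ≤ ·) := by
        rw [hws, List.pairwise_map]
        apply List.Pairwise.imp_of_mem ?_ hsortF
        intro u v hu hv huv
        exact hpmono u (hmemT u hu) v (hmemT v hv) huv.le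
      set bF := ws.toFinset with hbF
      have hbsub : (bF : Set ℝ) ⊆ (A : Set ℝ) := by
        intro z hz
        rw [Finset.mem_coe, hbF, List.mem_toFinset, hws, List.mem_map] at hz
        obtain ⟨y, hy, hyz⟩ := hz
        have hzA := (hpA y (hmemT y hy)).1
        rw [hyz] at hzA
        exact_mod_cast hzA
      have hbne : bF.Nonempty := ⟨p a, by rw [hbF, List.mem_toFinset, hws]; simp⟩
      have hsqs := st18_sq_sorted ws hwss
      have hsq : bF.sort (· ≤ ·) = st18_sq ws := by
        apply (fun h1 h2 h3 => List.Perm.eq_of_pairwise' (r := fun x1 x2 : ℝ => x1 ≤ x2) h2 h3 h1)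
        · apply List.perm_of_nodup_nodup_toFinset_eq (Finset.sort_nodup _ _) hsqs.nodup
          rw [Finset.sort_toFinset, hbF, st18_sq_toFinset]
        · exact Finset.pairwise_sort _ _
        · exact hsqs.imp le_of_lt
      have hGb : st18_G ws = finMag bF - 1 := by
        rw [st18_finMag bF hbne, hsq, ← st18_G_sq ws hwss]; ring
      have hlastT : st18_last a t ∈ T := hmemT _ (st18_last_mem t a)
      have haT : a ∈ T := hmemT a (by simp)
      have hpa := hpA a haT
      have hpl := hpA _ hlastT
      have h1 : p (st18_last a t) ≤ A.max' hA := Finset.le_max' A _ hpl.1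
      have h2 : A.min' hA ≤ p a := Finset.min'_le A _ hpa.1
      have hphi : ((st18_last a t - p (st18_last a t)) - (a - p a))/2 ≤ r := by
        have h3 := hpl.2.2
        have h4 := hpa.2.1
        linarith
      have hrterm : r * (p (st18_last a t) - p a)/2 ≤ r * (A.max' hA - A.min' hA)/2 := by
        have h5 : p (st18_last a t) - p a ≤ A.max' hA - A.min' hA := by linarith
        have h6 := mul_le_mul_of_nonneg_left h5 hr
        linarith
      have hles : finMag F ≤ finMag bF + R := by
        rw [hFmag, hR]
        linarith [htel, hGb, hphi, hrterm]
      have hfbnn : (0:ℝ) ≤ finMag bF := by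
        obtain ⟨c, u, hcu⟩ : ∃ c u, bF.sort (· ≤ ·) = c :: u := by
          cases h : bF.sort (· ≤ ·) with
          | nil =>
            exfalso
            have h1 := Finset.length_sort (α := ℝ) (· ≤ ·) (s := bF)
            rw [h] at h1
            have h2 := Finset.card_pos.2 hbne
            simp at h1; omega
          | cons c u => exact ⟨c, u, rfl⟩
        have h7 := st18_G_nonneg (c :: u) (hcu ▸ Finset.pairwise_sort _ _)
        rw [st18_finMag bF hbne, hcu]
        linarith
      have hble : finMag bF ≤ cMag (A : Set ℝ) := by
        have h3 : ENNReal.ofReal (finMag bF) ≤ cMagE (A : Set ℝ) := by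
          simp only [cMagE]
          exact le_iSup₂ (f := fun (s : Finset ℝ) (_ : (s : Set ℝ) ⊆ (A : Set ℝ)) =>
            ENNReal.ofReal (finMag s)) bF hbsub
        have h4 := ENNReal.toReal_mono hAfin h3
        rw [ENNReal.toReal_ofReal hfbnn] at h4
        exact h4
      linarith
  have hTbound : cMagE T ≤ ENNReal.ofReal (cMag (A : Set ℝ) + R) := by
    simp only [cMagE]
    exact iSup_le fun F => iSup_le fun hF => ENNReal.ofReal_le_ofReal (hkey F hF)
  have hfinal : cMag T ≤ cMag (A : Set ℝ) + R := by
    have h5 := ENNReal.toReal_mono (ENNReal.ofReal_ne_top) hTbound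
    have h6 : (0:ℝ) ≤ cMag (A : Set ℝ) + R := by
      have := ENNReal.toReal_nonneg (a := cMagE (A : Set ℝ))
      rw [cMag]
      linarith
    rw [ENNReal.toReal_ofReal h6] at h5
    exact h5
  linarith
end
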